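/- arXiv:2209.00938 — 2 statements merged into one kernel-verified Lean document; each statement's English description precedes it below -/
import Mathlib

section
/- For each real m ≥ 0 and all integers ξ, η ≥ 0: a₁(ξ−η+1, ξ+η+1, m, 1, u₁) = (−1)^{ξ+1} · m · (1+m²)^{δ₂(ξ(η+1))} · (1+m²)^{−(ξ+η)/2} · Σ_{j=0}^{⌊ξ/2⌋} C(⌊ξ/2⌋, j)·C(⌊(η−1)/2⌋, j)·(1 − (1+m²)²)^j. -/
open scoped BigOperators

/-- Direction of a checker move encoded by a Boolean: `true` = upwards-right
(vector `(ε,ε)`), `false` = upwards-left (vector `(-ε,ε)`). -/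
def dirZ (b : Bool) : ℤ := if b then 1 else -1

/-- The `k`-th direction of a path with `n` moves (dummy value `false` out of range). -/
def extd {n : ℕ} (d : Fin n → Bool) (k : ℕ) : Bool := if h : k < n then d ⟨k, h⟩ else false

/-- The (integer) space coordinate of a checker path after `k` moves. -/
def pathPos {n : ℕ} (d : Fin n → Bool) (k : ℕ) : ℤ := ∑ i ∈ Finset.range k, dirZ (extd d i)

/-- The number of turns of a checker path. -/
def pathTurns {n : ℕ} (d : Fin n → Bool) : ℕ :=
  ((Finset.range n).filter (fun k => 0 < k ∧ extd d (k - 1) ≠ extd d k)).card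

/-- Feynman checkers wave function `a(x,t,m,ε,u)` in an external field `u`, where the field
`u` is given as a function of the midpoint of an auxiliary edge. -/
noncomputable def kwf (m ε : ℝ) (u : ℝ → ℝ → ℝ) (x t : ℝ) : ℂ :=
  (((1 + m ^ 2 * ε ^ 2) ^ ((1 - t / ε) / 2) : ℝ) : ℂ) * Complex.I *
    ∑ d ∈ Finset.univ.filter
        (fun d : Fin ((⌊t / ε⌋).toNat) → Bool =>
          extd d 0 = true ∧ pathPos d ((⌊t / ε⌋).toNat) = ⌊x / ε⌋),
      (-(Complex.I) * (m * ε)) ^ (pathTurns d) *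
        ∏ k ∈ Finset.range ((⌊t / ε⌋).toNat),
          ((u (ε * pathPos d k + ε * (dirZ (extd d k)) / 2) (ε * k + ε / 2) : ℝ) : ℂ)

/-- `a₁(x,t,m,ε,u)`: the real part of the wave function. -/
noncomputable def ka1 (m ε : ℝ) (u : ℝ → ℝ → ℝ) (x t : ℝ) : ℝ := (kwf m ε u x t).re

/-- `a₂(x,t,m,ε,u)`: the imaginary part of the wave function. -/
noncomputable def ka2 (m ε : ℝ) (u : ℝ → ℝ → ℝ) (x t : ℝ) : ℝ := (kwf m ε u x t).im

/-- `P(x,t,m,ε,u)`: the probability to find the electron at `(x,t)`. -/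
noncomputable def kP (m ε : ℝ) (u : ℝ → ℝ → ℝ) (x t : ℝ) : ℝ := ‖kwf m ε u x t‖ ^ 2

/- The homogeneous electromagnetic field `u_ε`, as a function of the midpoint `(X,T)`
of an auxiliary edge: for `(x,t) ∈ εℤ²`, `u_ε(x+ε/2, t+ε/2) = -1` iff `(t-x)/(4ε) ∈ ℤ`. -/
open Classical in
noncomputable def uhom (ε : ℝ) : ℝ → ℝ → ℝ := fun X T =>
  if ∃ k : ℤ, T - X = 4 * ε * k then -1 else 1
/-- Extended binomial coefficient: `C(a,b) = 0` if `a < 0` or `b < 0`. -/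
def zchoose (a b : ℤ) : ℤ := if 0 ≤ a ∧ 0 ≤ b then (a.toNat).choose (b.toNat) else 0

/-- Bessel function of the first kind of order 0 (power series). -/
noncomputable def besselJ0 (z : ℝ) : ℝ :=
  ∑' j : ℕ, (-1 : ℝ) ^ j * (z / 2) ^ (2 * j) / ((j.factorial : ℝ)) ^ 2

/-- Bessel function of the first kind of order 1 (power series). -/
noncomputable def besselJ1 (z : ℝ) : ℝ :=
  ∑' j : ℕ, (-1 : ℝ) ^ j * (z / 2) ^ (2 * j + 1) / ((j.factorial : ℝ) * ((j + 1).factorial : ℝ))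

/-- Truncated hypergeometric sum `₂F₁(a,b;c;z)` with integer parameters,
summed for `k = 0, …, K`. -/
noncomputable def hypF (a b c : ℤ) (K : ℕ) (z : ℝ) : ℝ :=
  ∑ k ∈ Finset.range (K + 1),
    (∏ l ∈ Finset.range k, (((a + l) * (b + l) : ℤ) : ℝ) / (((1 + l) * (c + l) : ℤ) : ℝ)) * z ^ k

/-- `ω_p = (1/(2ε))·arcsin(sin(2pε)/(1+m²ε²))`. -/
noncomputable def omg (m ε p : ℝ) : ℝ :=
  (1 / (2 * ε)) * Real.arcsin (Real.sin (2 * p * ε) / (1 + m ^ 2 * ε ^ 2))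

/-- `(-1)^q` for a real exponent `q`, with the convention `(-1)^(n/2) = iⁿ`:
`neg1pow q = exp(iπq)`. -/
noncomputable def neg1pow (q : ℝ) : ℂ := Complex.exp (Complex.I * Real.pi * q)

/-- The Airy function `Ai(λ) = (1/π)·lim_{R→∞} ∫₀^R cos(y³/3 + λy) dy`. -/
noncomputable def AiryAi (lam : ℝ) : ℝ :=
  (1 / Real.pi) *
    Filter.limUnder Filter.atTop (fun R : ℝ => ∫ y in (0 : ℝ)..R, Real.cos (y ^ 3 / 3 + lam * y))

/-- The function `θ̃(v)` from Theorem `Airy` of the paper. -/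
noncomputable def thetaTilde (m ε v : ℝ) : ℝ :=
  (1 / (2 * ε)) *
    (|v| * Real.arccos (|v| * Real.sqrt ((1 + m ^ 2 * ε ^ 2) ^ 2 - 1) / Real.sqrt (1 - v ^ 2)) -
      Real.arccos (Real.sqrt ((1 + m ^ 2 * ε ^ 2) ^ 2 - 1) /
        ((1 + m ^ 2 * ε ^ 2) * Real.sqrt (1 - v ^ 2))))

-- basic lemmas
lemma extd_snoc_lt {n : ℕ} (d : Fin n → Bool) (b : Bool) {k : ℕ} (hk : k < n) :
    extd (Fin.snoc d b) k = extd d k := by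
  unfold extd
  rw [dif_pos hk, dif_pos (Nat.lt_succ_of_lt hk)]
  have : (⟨k, Nat.lt_succ_of_lt hk⟩ : Fin (n+1)) = Fin.castSucc ⟨k, hk⟩ := rfl
  rw [this, Fin.snoc_castSucc]

lemma extd_snoc_last {n : ℕ} (d : Fin n → Bool) (b : Bool) :
    extd (Fin.snoc d b) n = b := by
  unfold extd
  rw [dif_pos (Nat.lt_succ_self n)]
  have : (⟨n, Nat.lt_succ_self n⟩ : Fin (n+1)) = Fin.last n := rfl
  rw [this, Fin.snoc_last]

lemma pathPos_snoc {n : ℕ} (d : Fin n → Bool) (b : Bool) {k : ℕ} (hk : k ≤ n) :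
    pathPos (Fin.snoc d b) k = pathPos d k := by
  unfold pathPos
  refine Finset.sum_congr rfl fun i hi => ?_
  rw [extd_snoc_lt d b (lt_of_lt_of_le (Finset.mem_range.mp hi) hk)]

lemma pathPos_snoc_succ {n : ℕ} (d : Fin n → Bool) (b : Bool) :
    pathPos (Fin.snoc d b) (n+1) = pathPos d n + dirZ b := by
  unfold pathPos
  rw [Finset.sum_range_succ, extd_snoc_last]
  congr 1
  refine Finset.sum_congr rfl fun i hi => ?_
  rw [extd_snoc_lt d b (Finset.mem_range.mp hi)]

lemma pathTurns_snoc {n : ℕ} (hn : 1 ≤ n) (d : Fin n → Bool) (b : Bool) :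
    pathTurns (Fin.snoc d b) = pathTurns d + (if extd d (n-1) = b then 0 else 1) := by
  unfold pathTurns
  rw [Finset.range_add_one, Finset.filter_insert]
  have hmem : n ∉ Finset.range n := by simp
  have hfe : (Finset.range n).filter
      (fun k => 0 < k ∧ extd (Fin.snoc d b) (k - 1) ≠ extd (Fin.snoc d b) k)
      = (Finset.range n).filter (fun k => 0 < k ∧ extd d (k - 1) ≠ extd d k) := by
    refine Finset.filter_congr fun k hk => ?_
    have hk' := Finset.mem_range.mp hk
    rw [extd_snoc_lt d b hk', extd_snoc_lt d b (lt_of_le_of_lt (Nat.sub_le k 1) hk')]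
  by_cases h : extd d (n-1) = b
  · have hcond : ¬ (0 < n ∧ extd (Fin.snoc d b) (n-1) ≠ extd (Fin.snoc d b) n) := by
      rw [extd_snoc_lt d b (by omega), extd_snoc_last]
      push_neg
      intro _
      exact h
    rw [if_neg hcond, hfe, if_pos h]
    simp
  · have hcond : (0 < n ∧ extd (Fin.snoc d b) (n-1) ≠ extd (Fin.snoc d b) n) := by
      rw [extd_snoc_lt d b (by omega), extd_snoc_last]
      exact ⟨hn, h⟩
    rw [if_pos hcond, hfe, if_neg h, Finset.card_insert_of_notMem (by simp)]


lemma turn_parity {n : ℕ} (d : Fin n → Bool) :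
    ∀ k, k < n → (extd d k = extd d 0 ↔
      ((Finset.range (k+1)).filter (fun j => 0 < j ∧ extd d (j - 1) ≠ extd d j)).card % 2 = 0) := by
  intro k
  induction k with
  | zero =>
    intro _
    rw [Finset.range_one, Finset.filter_singleton, if_neg (by simp)]
    simp
  | succ k ih =>
    intro hk
    have ihk := ih (by omega)
    rw [Finset.range_add_one, Finset.filter_insert]
    have hnm : (k+1) ∉ Finset.range (k+1) := by simp
    by_cases h : extd d ((k+1) - 1) ≠ extd d (k+1)
    · rw [if_pos ⟨Nat.succ_pos k, h⟩, Finset.card_insert_of_notMem (by simp)]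
      simp only [Nat.add_sub_cancel] at h
      cases hek : extd d k <;> cases hek1 : extd d (k+1) <;> cases he0 : extd d 0 <;>
        simp_all <;> omega
    · rw [if_neg (by tauto)]
      simp only [Nat.add_sub_cancel, not_not] at h
      cases hek : extd d k <;> cases hek1 : extd d (k+1) <;> cases he0 : extd d 0 <;>
        simp_all

lemma pathTurns_parity {n : ℕ} (hn : 1 ≤ n) (d : Fin n → Bool) (h0 : extd d 0 = true) :
    extd d (n-1) = true ↔ pathTurns d % 2 = 0 := by
  have h := turn_parity d (n-1) (by omega)
  rw [h0] at h
  unfold pathTurns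
  rw [show n - 1 + 1 = n from by omega] at h
  exact h


noncomputable def wgt (m : ℝ) (u : ℝ → ℝ → ℝ) (n : ℕ) (d : Fin n → Bool) : ℂ :=
  (-(Complex.I) * m) ^ (pathTurns d) *
    ∏ k ∈ Finset.range n,
      ((u ((pathPos d k : ℝ) + (dirZ (extd d k) : ℝ) / 2) ((k : ℝ) + 1/2) : ℝ) : ℂ)

noncomputable def wsum (m : ℝ) (u : ℝ → ℝ → ℝ) (n : ℕ) (X : ℤ) : ℂ :=
  ∑ d ∈ Finset.univ.filter
      (fun d : Fin n → Bool => extd d 0 = true ∧ pathPos d n = X), wgt m u n d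

noncomputable def wsumb (m : ℝ) (u : ℝ → ℝ → ℝ) (n : ℕ) (X : ℤ) (b : Bool) : ℂ :=
  ∑ d ∈ Finset.univ.filter
      (fun d : Fin n → Bool => (extd d 0 = true ∧ pathPos d n = X) ∧ extd d (n-1) = b),
    wgt m u n d

lemma kwf_eq_wsum (m : ℝ) (u : ℝ → ℝ → ℝ) (n : ℕ) (X : ℤ) :
    kwf m 1 u X n
      = (((1 + m ^ 2) ^ ((1 - (n : ℝ)) / 2) : ℝ) : ℂ) * Complex.I * wsum m u n X := by
  unfold kwf
  have h : (⌊(n:ℝ)/1⌋).toNat = n := by norm_num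
  revert h
  generalize (⌊(n:ℝ)/1⌋).toNat = T
  intro h
  subst h
  unfold wsum wgt
  norm_num

lemma wsum_eq_add (m : ℝ) (u : ℝ → ℝ → ℝ) (n : ℕ) (X : ℤ) :
    wsum m u n X = wsumb m u n X true + wsumb m u n X false := by
  unfold wsum wsumb
  rw [← Finset.sum_filter_add_sum_filter_not
      (Finset.univ.filter (fun d : Fin n → Bool => extd d 0 = true ∧ pathPos d n = X))
      (fun d => extd d (n-1) = true)]
  rw [Finset.filter_filter, Finset.filter_filter]
  congr 1
  apply Finset.sum_congr _ (fun _ _ => rfl)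
  apply Finset.filter_congr
  intro d _
  simp

lemma aux_re_mul (a b c : ℝ) : ((a:ℂ) * (-(Complex.I) * (b:ℂ)) * (c:ℂ)).re = 0 := by
  simp [Complex.mul_re, Complex.mul_im]

lemma wsumb_true_im (m : ℝ) (u : ℝ → ℝ → ℝ) {n : ℕ} (hn : 1 ≤ n) (X : ℤ) :
    (wsumb m u n X true).im = 0 := by
  unfold wsumb
  rw [Complex.im_sum]
  refine Finset.sum_eq_zero fun d hd => ?_
  rw [Finset.mem_filter] at hd
  obtain ⟨-, ⟨h0, -⟩, hlast⟩ := hd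
  have hpar : pathTurns d % 2 = 0 := (pathTurns_parity hn d h0).mp hlast
  obtain ⟨r, hr⟩ := Nat.even_iff.mpr hpar
  unfold wgt
  rw [show pathTurns d = 2 * r from by omega, pow_mul,
    show (-(Complex.I) * m) ^ 2 = (((-(m^2)) : ℝ) : ℂ) from by
      push_cast; ring_nf; rw [Complex.I_sq]; ring,
    ← Complex.ofReal_pow, ← Complex.ofReal_prod, ← Complex.ofReal_mul]
  exact Complex.ofReal_im _

lemma wsumb_false_re (m : ℝ) (u : ℝ → ℝ → ℝ) {n : ℕ} (hn : 1 ≤ n) (X : ℤ) :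
    (wsumb m u n X false).re = 0 := by
  unfold wsumb
  rw [Complex.re_sum]
  refine Finset.sum_eq_zero fun d hd => ?_
  rw [Finset.mem_filter] at hd
  obtain ⟨-, ⟨h0, -⟩, hlast⟩ := hd
  have hpar : ¬ (pathTurns d % 2 = 0) := by
    intro h
    rw [(pathTurns_parity hn d h0).mpr h] at hlast
    exact Bool.noConfusion hlast
  obtain ⟨r, hr⟩ : ∃ r, pathTurns d = 2 * r + 1 := ⟨pathTurns d / 2, by omega⟩
  unfold wgt
  rw [hr, pow_succ, pow_mul,
    show (-(Complex.I) * m) ^ 2 = (((-(m^2)) : ℝ) : ℂ) from by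
      push_cast; ring_nf; rw [Complex.I_sq]; ring,
    ← Complex.ofReal_pow, ← Complex.ofReal_prod]
  exact aux_re_mul _ _ _

lemma wsumb_succ (m : ℝ) (u : ℝ → ℝ → ℝ) {n : ℕ} (hn : 1 ≤ n) (X : ℤ) (b : Bool) :
    wsumb m u (n+1) X b
      = ((u ((X:ℝ) - (dirZ b : ℝ)/2) ((n:ℝ) + 1/2) : ℝ) : ℂ) *
        (wsumb m u n (X - dirZ b) b + (-(Complex.I) * m) * wsumb m u n (X - dirZ b) (!b)) := by
  classical
  set P : Finset (Fin n → Bool) := Finset.univ.filter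
      (fun d : Fin n → Bool => extd d 0 = true ∧ pathPos d n = X - dirZ b) with hP
  set uf : ℂ := ((u ((X:ℝ) - (dirZ b : ℝ)/2) ((n:ℝ) + 1/2) : ℝ) : ℂ) with huf
  have hnot : ∀ d : Fin n → Bool, (extd d (n-1) = !b) ↔ ¬ (extd d (n-1) = b) := by
    intro d; cases hx : extd d (n-1) <;> cases b <;> simp
  -- step 1
  have h1 : wsumb m u n (X - dirZ b) b + (-(Complex.I) * m) * wsumb m u n (X - dirZ b) (!b)
      = ∑ d ∈ P, (if extd d (n-1) = b then wgt m u n d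
          else (-(Complex.I) * m) * wgt m u n d) := by
    unfold wsumb
    rw [Finset.mul_sum,
      ← Finset.sum_filter_add_sum_filter_not P (fun d => extd d (n-1) = b)]
    congr 1
    · rw [hP, Finset.filter_filter]
      exact Finset.sum_congr rfl fun d hd => by
        rw [Finset.mem_filter] at hd
        rw [if_pos hd.2.2]
    · rw [hP, Finset.filter_filter]
      refine Finset.sum_congr (Finset.filter_congr fun d _ => ?_) fun d hd => ?_
      · exact and_congr_right fun _ => hnot d
      · rw [Finset.mem_filter] at hd
        rw [if_neg hd.2.2]
  rw [h1, Finset.mul_sum]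
  -- step 2 : bijection
  unfold wsumb
  refine (Finset.sum_nbij'
    (fun d' : Fin n → Bool => (Fin.snoc d' b : Fin (n+1) → Bool))
    (fun d : Fin (n+1) → Bool => (Fin.init d : Fin n → Bool)) ?_ ?_ ?_ ?_ ?_).symm
  · -- maps P to A
    intro d' hd'
    rw [hP, Finset.mem_filter] at hd'
    obtain ⟨-, h0, hpos⟩ := hd'
    rw [Finset.mem_filter]
    refine ⟨Finset.mem_univ _, ⟨?_, ?_⟩, ?_⟩
    · rw [extd_snoc_lt d' b (by omega : 0 < n)]; exact h0
    · rw [pathPos_snoc_succ, hpos]; ring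
    · exact extd_snoc_last d' b
  · -- maps A to P
    intro d hd
    rw [Finset.mem_filter] at hd
    obtain ⟨-, ⟨h0, hpos⟩, hl⟩ := hd
    have hlast : d (Fin.last n) = b := by
      have h := hl
      unfold extd at h
      simp only [Nat.add_sub_cancel] at h
      rw [dif_pos (Nat.lt_succ_self n)] at h
      exact h
    have hd' : Fin.snoc (Fin.init d) b = d := by
      rw [← hlast]; exact Fin.snoc_init_self d
    rw [hP, Finset.mem_filter]
    refine ⟨Finset.mem_univ _, ?_, ?_⟩
    · show extd (Fin.init d) 0 = true
      rw [← extd_snoc_lt (Fin.init d) b (by omega : 0 < n), hd']; exact h0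
    · show pathPos (Fin.init d) n = X - dirZ b
      have h2 : pathPos (Fin.snoc (Fin.init d) b) (n+1) = X := by rw [hd']; exact hpos
      rw [pathPos_snoc_succ] at h2
      omega
  · -- j (i a) = a
    intro d' _
    show Fin.init (Fin.snoc d' b : Fin (n+1) → Bool) = d'
    exact Fin.init_snoc (α := fun _ : Fin (n+1) => Bool) b d'
  · -- i (j a) = a
    intro d hd
    rw [Finset.mem_filter] at hd
    have hlast : d (Fin.last n) = b := by
      have h := hd.2.2
      unfold extd at h
      simp only [Nat.add_sub_cancel] at h
      rw [dif_pos (Nat.lt_succ_self n)] at h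
      exact h
    show Fin.snoc (Fin.init d) b = d
    rw [← hlast]; exact Fin.snoc_init_self d
  · -- function equality : ∀ d' ∈ P, uf * ite = wgt (snoc d' b)
    intro d' hd'
    rw [hP, Finset.mem_filter] at hd'
    obtain ⟨-, h0, hpos⟩ := hd'
    show uf * _ = wgt m u (n+1) (Fin.snoc d' b)
    unfold wgt
    rw [pathTurns_snoc hn d' b, pow_add, Finset.prod_range_succ]
    have hpre : ∏ k ∈ Finset.range n,
        ((u ((pathPos (Fin.snoc d' b) k : ℝ) + (dirZ (extd (Fin.snoc d' b) k) : ℝ) / 2)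
          ((k : ℝ) + 1/2) : ℝ) : ℂ)
        = ∏ k ∈ Finset.range n,
        ((u ((pathPos d' k : ℝ) + (dirZ (extd d' k) : ℝ) / 2) ((k : ℝ) + 1/2) : ℝ) : ℂ) := by
      refine Finset.prod_congr rfl fun k hk => ?_
      have hk' := Finset.mem_range.mp hk
      rw [pathPos_snoc d' b (le_of_lt hk'), extd_snoc_lt d' b hk']
    have hlastfac : ((u ((pathPos (Fin.snoc d' b) n : ℝ)
          + (dirZ (extd (Fin.snoc d' b) n) : ℝ) / 2) ((n : ℝ) + 1/2) : ℝ) : ℂ) = uf := by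
      rw [pathPos_snoc d' b (le_refl n), extd_snoc_last, hpos, huf]
      congr 2
      push_cast
      ring
    rw [hpre, hlastfac]
    by_cases hb' : extd d' (n-1) = b
    · rw [if_pos hb', if_pos hb', pow_zero]
      ring
    · rw [if_neg hb', if_neg hb', pow_one]
      ring


lemma im_aux (r mm : ℝ) (T F : ℂ) (hT : T.im = 0) :
    ((r:ℂ) * (F + (-(Complex.I)*(mm:ℂ)) * T)).im = r * (F.im - mm * T.re) := by
  simp only [Complex.mul_im, Complex.mul_re, Complex.add_im, Complex.add_re, Complex.neg_re,
    Complex.neg_im, Complex.I_re, Complex.I_im, Complex.ofReal_re,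
    Complex.ofReal_im, hT]
  ring

lemma re_aux (r mm : ℝ) (T F : ℂ) (hF : F.re = 0) :
    ((r:ℂ) * (T + (-(Complex.I)*(mm:ℂ)) * F)).re = r * (T.re + mm * F.im) := by
  simp only [Complex.mul_im, Complex.mul_re, Complex.add_im, Complex.add_re, Complex.neg_re,
    Complex.neg_im, Complex.I_re, Complex.I_im, Complex.ofReal_re,
    Complex.ofReal_im, hF]
  ring

lemma nrm_succ (m : ℝ) (n : ℕ) : ((1+m^2) : ℝ) ^ ((1 - ((n:ℝ)+1))/2)
    = (1+m^2)^(-(1/2 : ℝ)) * (1+m^2)^((1 - (n:ℝ))/2) := by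
  rw [← Real.rpow_add (by positivity)]
  congr 1
  ring

lemma ka1_extract (m : ℝ) (u : ℝ → ℝ → ℝ) {n : ℕ} (hn : 1 ≤ n) (X : ℤ) :
    ka1 m 1 u X n = -(((1+m^2) : ℝ) ^ ((1 - (n:ℝ))/2)) * (wsumb m u n X false).im := by
  unfold ka1
  rw [kwf_eq_wsum, wsum_eq_add]
  have hT := wsumb_true_im m u hn X
  simp [Complex.mul_re, Complex.mul_im, hT]

lemma ka2_extract (m : ℝ) (u : ℝ → ℝ → ℝ) {n : ℕ} (hn : 1 ≤ n) (X : ℤ) :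
    ka2 m 1 u X n = (((1+m^2) : ℝ) ^ ((1 - (n:ℝ))/2)) * (wsumb m u n X true).re := by
  unfold ka2
  rw [kwf_eq_wsum, wsum_eq_add]
  have hF := wsumb_false_re m u hn X
  simp [Complex.mul_re, Complex.mul_im, hF]

lemma recur1 (m : ℝ) (u : ℝ → ℝ → ℝ) {n : ℕ} (hn : 1 ≤ n) (X : ℤ) :
    ka1 m 1 u X ((n:ℝ)+1) = (1+m^2)^(-(1/2 : ℝ)) * u ((X:ℝ)+1/2) ((n:ℝ)+1/2)
      * (ka1 m 1 u (X+1 : ℤ) n + m * ka2 m 1 u (X+1 : ℤ) n) := by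
  have h1 : ((n:ℝ)+1) = ((n+1 : ℕ) : ℝ) := by push_cast; ring
  rw [h1, ka1_extract m u (by omega) X, wsumb_succ m u hn X false]
  have hdir : ((X:ℝ) - (dirZ false : ℝ)/2) = (X:ℝ)+1/2 := by
    unfold dirZ; norm_num
  have hXd : X - dirZ false = X + 1 := by unfold dirZ; norm_num
  rw [hdir, hXd, show (!false) = true from rfl]
  rw [im_aux _ _ _ _ (wsumb_true_im m u hn (X+1))]
  rw [ka1_extract m u hn (X+1), ka2_extract m u hn (X+1)]
  push_cast
  rw [nrm_succ]
  ring

lemma recur2 (m : ℝ) (u : ℝ → ℝ → ℝ) {n : ℕ} (hn : 1 ≤ n) (X : ℤ) :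
    ka2 m 1 u X ((n:ℝ)+1) = (1+m^2)^(-(1/2 : ℝ)) * u ((X:ℝ)-1/2) ((n:ℝ)+1/2)
      * (ka2 m 1 u (X-1 : ℤ) n - m * ka1 m 1 u (X-1 : ℤ) n) := by
  have h1 : ((n:ℝ)+1) = ((n+1 : ℕ) : ℝ) := by push_cast; ring
  rw [h1, ka2_extract m u (by omega) X, wsumb_succ m u hn X true]
  have hdir : ((X:ℝ) - (dirZ true : ℝ)/2) = (X:ℝ)-1/2 := by
    unfold dirZ; norm_num
  have hXd : X - dirZ true = X - 1 := by unfold dirZ; norm_num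
  rw [hdir, hXd]
  have hb : (!true) = false := rfl
  rw [hb, re_aux _ _ _ _ (wsumb_false_re m u hn (X-1))]
  rw [ka1_extract m u hn (X-1), ka2_extract m u hn (X-1)]
  push_cast
  rw [nrm_succ]
  ring

lemma dirZ_le_one (b : Bool) : dirZ b ≤ 1 := by cases b <;> simp [dirZ]
lemma neg_one_le_dirZ (b : Bool) : -1 ≤ dirZ b := by cases b <;> simp [dirZ]

lemma pathPos_le {n : ℕ} (d : Fin n → Bool) (k : ℕ) : pathPos d k ≤ k := by
  unfold pathPos
  calc ∑ i ∈ Finset.range k, dirZ (extd d i) ≤ ∑ i ∈ Finset.range k, 1 :=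
        Finset.sum_le_sum fun i _ => dirZ_le_one _
    _ = k := by simp

lemma kwf_vanish_hi (m : ℝ) (u : ℝ → ℝ → ℝ) (n : ℕ) (X : ℤ) (hX : (n:ℤ) < X) :
    kwf m 1 u X n = 0 := by
  rw [kwf_eq_wsum]
  unfold wsum
  rw [Finset.filter_eq_empty_iff.mpr, Finset.sum_empty, mul_zero]
  intro d _
  rw [not_and]
  intro _
  intro hpos
  have := pathPos_le d n
  omega

lemma kwf_vanish_lo (m : ℝ) (u : ℝ → ℝ → ℝ) {n : ℕ} (hn : 1 ≤ n) :
    kwf m 1 u (-(n:ℤ) : ℤ) n = 0 := by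
  rw [kwf_eq_wsum]
  unfold wsum
  rw [Finset.filter_eq_empty_iff.mpr, Finset.sum_empty, mul_zero]
  intro d _
  rw [not_and]
  intro h0
  intro hpos
  obtain ⟨k, rfl⟩ : ∃ k, n = k + 1 := ⟨n - 1, by omega⟩
  unfold pathPos at hpos
  rw [Finset.sum_range_succ'] at hpos
  rw [h0] at hpos
  have hlb : -(k:ℤ) ≤ ∑ i ∈ Finset.range k, dirZ (extd d (i+1)) := by
    calc -(k:ℤ) = ∑ i ∈ Finset.range k, (-1 : ℤ) := by simp
      _ ≤ _ := Finset.sum_le_sum fun i _ => neg_one_le_dirZ _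
  rw [show dirZ true = 1 from rfl] at hpos
  omega

lemma uhom_one_eval (X T : ℝ) (z : ℤ) (h : T - X = (z:ℝ)) :
    uhom 1 X T = if (4:ℤ) ∣ z then -1 else 1 := by
  unfold uhom
  by_cases hd : (4:ℤ) ∣ z
  · rw [if_pos hd, if_pos]
    obtain ⟨k, hk⟩ := hd
    exact ⟨k, by rw [h, hk]; push_cast; ring⟩
  · rw [if_neg hd, if_neg]
    rintro ⟨k, hk⟩
    apply hd
    refine ⟨k, ?_⟩
    have : (z : ℝ) = ((4 * k : ℤ) : ℝ) := by rw [← h, hk]; push_cast; ring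
    exact_mod_cast this

lemma kwf_base (m : ℝ) : kwf m 1 (uhom 1) ((1:ℤ):ℝ) ((1:ℕ):ℝ) = -Complex.I := by
  rw [kwf_eq_wsum]
  unfold wsum
  have hfil : (Finset.univ.filter
      (fun d : Fin 1 → Bool => extd d 0 = true ∧ pathPos d 1 = 1))
      = {fun _ => true} := by
    apply Finset.ext
    intro d
    simp only [Finset.mem_filter, Finset.mem_univ, true_and, Finset.mem_singleton]
    constructor
    · rintro ⟨h0, -⟩
      funext i
      have : i = ⟨0, by omega⟩ := by
        apply Fin.ext
        omega
      rw [this]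
      unfold extd at h0
      rw [dif_pos (by omega : (0:ℕ) < 1)] at h0
      exact h0
    · rintro rfl
      constructor
      · unfold extd
        rw [dif_pos (by omega : (0:ℕ) < 1)]
      · unfold pathPos
        rw [Finset.sum_range_one]
        unfold extd dirZ
        rw [dif_pos (by omega : (0:ℕ) < 1)]
        simp
  rw [hfil, Finset.sum_singleton]
  unfold wgt
  have hturns : pathTurns (fun _ : Fin 1 => true) = 0 := by
    unfold pathTurns
    rw [Finset.range_one, Finset.filter_singleton, if_neg (by simp)]
    simp
  rw [hturns, pow_zero, Finset.prod_range_one]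
  have hpos0 : pathPos (fun _ : Fin 1 => true) 0 = 0 := by
    unfold pathPos
    simp
  have hext0 : extd (fun _ : Fin 1 => true) 0 = true := by
    unfold extd
    rw [dif_pos (by omega : (0:ℕ) < 1)]
  rw [hpos0, hext0]
  have hdir : ((dirZ true : ℤ) : ℝ) = 1 := by unfold dirZ; simp
  rw [hdir]
  have hu : uhom 1 (((0:ℤ):ℝ) + 1/2) (((0:ℕ):ℝ) + 1/2) = -1 := by
    rw [uhom_one_eval _ _ 0 (by push_cast; ring)]
    simp
  rw [hu]
  norm_num


lemma zchoose_neg_left (a b : ℤ) (h : a < 0) : zchoose a b = 0 := by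
  unfold zchoose; rw [if_neg (by omega)]

lemma zchoose_neg_right (a b : ℤ) (h : b < 0) : zchoose a b = 0 := by
  unfold zchoose; rw [if_neg (by omega)]

lemma zchoose_nat (n k : ℕ) : zchoose (n:ℤ) (k:ℤ) = (n.choose k : ℤ) := by
  unfold zchoose
  rw [if_pos (by omega)]
  congr 1 <;> omega

lemma zchoose_zero_right (a : ℤ) (h : 0 ≤ a) : zchoose a 0 = 1 := by
  unfold zchoose
  rw [if_pos (by omega)]
  simp

lemma zchoose_zero_left (j : ℕ) (h : 1 ≤ j) : zchoose 0 (j:ℤ) = 0 := by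
  have h0 : ((0:ℕ):ℤ) = (0:ℤ) := rfl
  rw [← h0, zchoose_nat, Nat.choose_eq_zero_of_lt (by omega)]
  try rfl

lemma zchoose_lt (n k : ℕ) (h : n < k) : zchoose (n:ℤ) (k:ℤ) = 0 := by
  rw [zchoose_nat, Nat.choose_eq_zero_of_lt h]
  try rfl

lemma zchoose_pascal (n : ℕ) (k : ℤ) :
    zchoose ((n:ℤ)+1) k = zchoose (n:ℤ) k + zchoose (n:ℤ) (k-1) := by
  rcases lt_trichotomy k 0 with hk | hk | hk
  · rw [zchoose_neg_right _ _ hk, zchoose_neg_right _ _ hk,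
      zchoose_neg_right _ _ (by omega)]
    ring
  · subst hk
    rw [zchoose_zero_right _ (by omega), zchoose_zero_right _ (by omega),
      zchoose_neg_right _ _ (by omega)]
    ring
  · obtain ⟨j, rfl⟩ : ∃ j : ℕ, k = (j:ℤ)+1 := ⟨(k-1).toNat, by omega⟩
    have h1 : ((n:ℤ)+1) = ((n+1 : ℕ) : ℤ) := by push_cast; ring
    have h2 : ((j:ℤ)+1) = ((j+1 : ℕ) : ℤ) := by push_cast; ring
    rw [h1, h2]
    have h3 : ((j+1:ℕ):ℤ)-1 = ((j : ℕ) : ℤ) := by push_cast; ring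
    rw [h3, zchoose_nat, zchoose_nat, zchoose_nat, Nat.choose_succ_succ]
    push_cast
    ring

lemma zchoose_pascal_real (n : ℕ) (k : ℤ) :
    ((zchoose ((n:ℤ)+1) k : ℤ) : ℝ)
      = ((zchoose (n:ℤ) k : ℤ) : ℝ) + ((zchoose (n:ℤ) (k-1) : ℤ) : ℝ) := by
  rw [zchoose_pascal]
  push_cast
  ring

lemma keyid (p q : ℕ) (z : ℝ) :
    ∑ j ∈ Finset.range (p+2), (zchoose ((p:ℤ)+1) (j:ℤ) : ℝ) * (zchoose (q:ℤ) (j:ℤ) : ℝ) * z^j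
    = ∑ j ∈ Finset.range (p+2), (zchoose ((p:ℤ)+1) (j:ℤ) : ℝ) * (zchoose ((q:ℤ)-1) (j:ℤ) : ℝ) * z^j
      + ∑ j ∈ Finset.range (p+1), (zchoose (p:ℤ) (j:ℤ) : ℝ) * (zchoose (q:ℤ) (j:ℤ) : ℝ) * z^j
      - (1-z) * ∑ j ∈ Finset.range (p+1),
          (zchoose (p:ℤ) (j:ℤ) : ℝ) * (zchoose ((q:ℤ)-1) (j:ℤ) : ℝ) * z^j := by
  rcases Nat.eq_zero_or_pos q with hq | hq
  · subst hq
    have hm1 : ((0:ℕ):ℤ) - 1 < 0 := by norm_num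
    have hz2 : ∑ j ∈ Finset.range (p+2),
        (zchoose ((p:ℤ)+1) (j:ℤ) : ℝ) * (zchoose (((0:ℕ):ℤ)-1) (j:ℤ) : ℝ) * z^j = 0 :=
      Finset.sum_eq_zero fun j _ => by
        rw [zchoose_neg_left _ _ hm1]; norm_num
    have hz4 : ∑ j ∈ Finset.range (p+1),
        (zchoose ((p:ℕ):ℤ) (j:ℤ) : ℝ) * (zchoose (((0:ℕ):ℤ)-1) (j:ℤ) : ℝ) * z^j = 0 :=
      Finset.sum_eq_zero fun j _ => by
        rw [zchoose_neg_left _ _ hm1]; norm_num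
    rw [hz2, hz4]
    have hone : ∀ (N A : ℕ), ∑ j ∈ Finset.range (N+1),
        (zchoose (A:ℤ) (j:ℤ) : ℝ) * (zchoose ((0:ℕ):ℤ) (j:ℤ) : ℝ) * z^j = 1 := by
      intro N A
      rw [Finset.sum_eq_single 0]
      · rw [show ((0:ℕ):ℤ) = ((0:ℕ):ℤ) from rfl, zchoose_nat A 0, zchoose_nat 0 0]
        norm_num
      · intro j _ hj
        rw [zchoose_lt 0 j (by omega)]
        norm_num
      · intro h
        exact absurd (Finset.mem_range.mpr (by omega)) h
    rw [show ((p:ℤ)+1) = ((p+1:ℕ):ℤ) from by push_cast; ring,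
      show p+2 = (p+1)+1 from rfl,
      hone (p+1) (p+1), hone p p]
    ring
  · obtain ⟨t, rfl⟩ : ∃ t, q = t+1 := ⟨q-1, by omega⟩
    have hq1 : ((t+1:ℕ):ℤ) = (t:ℤ)+1 := by push_cast; ring
    have hq2 : ((t+1:ℕ):ℤ)-1 = (t:ℤ) := by push_cast; ring
    rw [hq1, show (t:ℤ)+1-1 = (t:ℤ) from by ring]
    -- extend the two short sums
    have hext : ∀ (B : ℤ), ∑ j ∈ Finset.range (p+1),
        (zchoose (p:ℤ) (j:ℤ) : ℝ) * (zchoose B (j:ℤ) : ℝ) * z^j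
        = ∑ j ∈ Finset.range (p+2), (zchoose (p:ℤ) (j:ℤ) : ℝ) * (zchoose B (j:ℤ) : ℝ) * z^j := by
      intro B
      rw [show p+2 = (p+1)+1 from rfl, Finset.sum_range_succ (n := p+1),
        zchoose_lt p (p+1) (by omega)]
      norm_num
    rw [hext, hext]
    -- shift identity
    have hshift : z * ∑ j ∈ Finset.range (p+2),
        (zchoose (p:ℤ) (j:ℤ) : ℝ) * (zchoose (t:ℤ) (j:ℤ) : ℝ) * z^j
        = ∑ j ∈ Finset.range (p+2),
          (zchoose (p:ℤ) ((j:ℤ)-1) : ℝ) * (zchoose (t:ℤ) ((j:ℤ)-1) : ℝ) * z^j := by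
      rw [← hext (t:ℤ)]
      have hL : z * ∑ j ∈ Finset.range (p+1),
          (zchoose (p:ℤ) (j:ℤ) : ℝ) * (zchoose (t:ℤ) (j:ℤ) : ℝ) * z^j
          = ∑ j ∈ Finset.range (p+1),
            (zchoose (p:ℤ) (j:ℤ) : ℝ) * (zchoose (t:ℤ) (j:ℤ) : ℝ) * z^(j+1) := by
        rw [Finset.mul_sum]
        exact Finset.sum_congr rfl fun j _ => by ring
      have hR : ∑ j ∈ Finset.range (p+2),
          (zchoose (p:ℤ) ((j:ℤ)-1) : ℝ) * (zchoose (t:ℤ) ((j:ℤ)-1) : ℝ) * z^j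
          = ∑ j ∈ Finset.range (p+1),
            (zchoose (p:ℤ) (j:ℤ) : ℝ) * (zchoose (t:ℤ) (j:ℤ) : ℝ) * z^(j+1) := by
        rw [show p+2 = (p+1)+1 from rfl, Finset.sum_range_succ']
        have h0 : ((zchoose ((p:ℕ):ℤ) (((0:ℕ):ℤ)-1) : ℤ) : ℝ)
            * ((zchoose ((t:ℕ):ℤ) (((0:ℕ):ℤ)-1) : ℤ) : ℝ) * z^(0:ℕ) = 0 := by
          rw [zchoose_neg_right ((p:ℕ):ℤ) _ (by norm_num)]
          norm_num
        rw [h0, add_zero]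
        refine Finset.sum_congr rfl fun j _ => ?_
        rw [show ((j+1:ℕ):ℤ)-1 = (j:ℤ) from by push_cast; ring]
      rw [hL, hR]
    -- rewrite (1-z) * S4
    rw [sub_mul, one_mul, hshift]
    -- now pointwise Pascal
    have hmain : ∑ j ∈ Finset.range (p+2),
        (zchoose ((p:ℤ)+1) (j:ℤ) : ℝ) * (zchoose ((t:ℤ)+1) (j:ℤ) : ℝ) * z^j
        = ∑ j ∈ Finset.range (p+2),
          ((zchoose ((p:ℤ)+1) (j:ℤ) : ℝ) * (zchoose (t:ℤ) (j:ℤ) : ℝ) * z^j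
            + (zchoose (p:ℤ) (j:ℤ) : ℝ) * (zchoose ((t:ℤ)+1) (j:ℤ) : ℝ) * z^j
            - (zchoose (p:ℤ) (j:ℤ) : ℝ) * (zchoose (t:ℤ) (j:ℤ) : ℝ) * z^j
            + (zchoose (p:ℤ) ((j:ℤ)-1) : ℝ) * (zchoose (t:ℤ) ((j:ℤ)-1) : ℝ) * z^j) := by
      refine Finset.sum_congr rfl fun j _ => ?_
      have hp := zchoose_pascal_real p (j:ℤ)
      have ht := zchoose_pascal_real t (j:ℤ)
      rw [hp, ht]
      ring
    rw [hmain]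
    rw [Finset.sum_add_distrib, Finset.sum_sub_distrib, Finset.sum_add_distrib]
    ring


noncomputable def Phi (m : ℝ) (ξ η : ℕ) : ℝ :=
  (-1 : ℝ) ^ (ξ + 1) * m * (1 + m ^ 2) ^ ((ξ * (η + 1)) % 2)
    * (1 + m ^ 2) ^ (-(((ξ : ℝ) + η) / 2))
    * ∑ j ∈ Finset.range (ξ / 2 + 1),
        (zchoose ((ξ : ℤ) / 2) (j : ℤ) : ℝ) * (zchoose ⌊((η : ℝ) - 1) / 2⌋ (j : ℤ) : ℝ)
          * (1 - (1 + m ^ 2) ^ 2) ^ j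

lemma floor_odd (q : ℕ) : ⌊((((2*q+1:ℕ)):ℝ) - 1)/2⌋ = (q:ℤ) := by
  have h : ((((2*q+1:ℕ)):ℝ) - 1)/2 = ((q:ℤ):ℝ) := by push_cast; ring
  rw [h, Int.floor_intCast]

lemma floor_even (q : ℕ) : ⌊((((2*q:ℕ)):ℝ) - 1)/2⌋ = (q:ℤ) - 1 := by
  rw [Int.floor_eq_iff]
  push_cast
  constructor <;> nlinarith [Nat.cast_nonneg (α := ℝ) q]

lemma Phi_eta_zero (m : ℝ) (ξ : ℕ) : Phi m ξ 0 = 0 := by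
  unfold Phi
  have hf : ⌊((((0:ℕ)):ℝ) - 1)/2⌋ = -1 := by
    rw [Int.floor_eq_iff] <;> norm_num
  rw [hf]
  have hs : ∑ j ∈ Finset.range (ξ / 2 + 1),
      (zchoose ((ξ : ℤ) / 2) (j : ℤ) : ℝ) * (zchoose (-1) (j : ℤ) : ℝ)
        * (1 - (1 + m ^ 2) ^ 2) ^ j = 0 :=
    Finset.sum_eq_zero fun j _ => by
      rw [zchoose_neg_left (-1) (j:ℤ) (by norm_num)]
      norm_num
  rw [hs, mul_zero]

lemma Phi_xi_zero (m : ℝ) (η : ℕ) (hη : 1 ≤ η) :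
    Phi m 0 η = -m * (1 + m^2) ^ (-((η:ℝ))/2 : ℝ) := by
  unfold Phi
  have h0 : ((0:ℕ):ℤ)/2 = 0 := by norm_num
  rw [h0]
  have hs : ∑ j ∈ Finset.range (0 / 2 + 1),
      (zchoose 0 (j : ℤ) : ℝ) * (zchoose ⌊((η : ℝ) - 1) / 2⌋ (j : ℤ) : ℝ)
        * (1 - (1 + m ^ 2) ^ 2) ^ j = 1 := by
    rw [show (0:ℕ)/2 + 1 = 1 from rfl, Finset.sum_range_one]
    rw [show ((0:ℕ):ℤ) = (0:ℤ) from rfl, zchoose_zero_right 0 le_rfl,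
      zchoose_zero_right _ (by
        rw [Int.le_floor]
        push_cast
        have : (1:ℝ) ≤ (η:ℝ) := by exact_mod_cast hη
        linarith)]
    norm_num
  rw [hs]
  have he : (-(((((0:ℕ)):ℝ) + (η:ℝ))/2) : ℝ) = (-((η:ℝ))/2 : ℝ) := by push_cast; ring
  rw [he]
  norm_num

lemma mod2_mul1 (x y : ℕ) (hx : x % 2 = 1) (hy : y % 2 = 1) : x*y % 2 = 1 := by
  rw [Nat.mul_mod, hx, hy]

lemma mod2_mul0l (x y : ℕ) (hx : x % 2 = 0) : x*y % 2 = 0 := by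
  rw [Nat.mul_mod, hx]; simp

lemma mod2_mul0r (x y : ℕ) (hy : y % 2 = 0) : x*y % 2 = 0 := by
  rw [Nat.mul_mod, hy]; simp

lemma Phi_star (m : ℝ) (a b : ℕ) :
    Phi m (a+1) (b+1)
      = (1+m^2)^(-(1/2) : ℝ) * (Phi m (a+1) b + (-1:ℝ)^(b+1) * Phi m a (b+1))
        - (-1:ℝ)^(b+1) * Phi m a b := by
  have hC : (0:ℝ) < 1 + m^2 := by positivity
  unfold Phi
  have e1 : (-(((((a+1:ℕ)):ℝ) + (((b+1:ℕ)):ℝ))/2) : ℝ)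
      = ((-(((((a:ℕ)):ℝ) + (((b:ℕ)):ℝ))/2) : ℝ) + (-(1/2) : ℝ)) + (-(1/2) : ℝ) := by
    push_cast; ring
  have e2 : (-(((((a+1:ℕ)):ℝ) + (((b:ℕ)):ℝ))/2) : ℝ)
      = (-(((((a:ℕ)):ℝ) + (((b:ℕ)):ℝ))/2) : ℝ) + (-(1/2) : ℝ) := by
    push_cast; ring
  have e3 : (-(((((a:ℕ)):ℝ) + (((b+1:ℕ)):ℝ))/2) : ℝ)
      = (-(((((a:ℕ)):ℝ) + (((b:ℕ)):ℝ))/2) : ℝ) + (-(1/2) : ℝ) := by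
    push_cast; ring
  rw [e1, e2, e3]
  simp only [Real.rpow_add hC]
  have fact1 : ((1+m^2)^(-(1/2) : ℝ)) * ((1+m^2)^(-(1/2) : ℝ)) * (1+m^2) = 1 := by
    rw [← Real.rpow_add hC, show ((-(1/2):ℝ) + (-(1/2):ℝ)) = -1 by norm_num,
      Real.rpow_neg (le_of_lt hC), Real.rpow_one]
    exact inv_mul_cancel₀ (ne_of_gt hC)
  rcases Nat.even_or_odd a with ha | ha
  · -- a even
    obtain ⟨p, hp⟩ := ha
    have hp2 : a = 2*p := by omega
    subst hp2
    rcases Nat.even_or_odd b with hb | hb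
    · -- Case C : a = 2p, b = 2q
      obtain ⟨q, hq⟩ := hb
      have hq2 : b = 2*q := by omega
      subst hq2
      rw [show (-1:ℝ)^(2*p+1+1) = 1 from Even.neg_one_pow (Nat.even_iff.mpr (by omega)),
        show (-1:ℝ)^(2*p+1) = -1 from Odd.neg_one_pow (Nat.odd_iff.mpr (by omega)),
        show (-1:ℝ)^(2*q+1) = -1 from Odd.neg_one_pow (Nat.odd_iff.mpr (by omega)),
        show (2*p+1) * (2*q+1+1) % 2 = 0 from mod2_mul0r _ _ (by omega),
        show (2*p+1) * (2*q+1) % 2 = 1 from mod2_mul1 _ _ (by omega) (by omega),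
        show (2*p) * (2*q+1+1) % 2 = 0 from mod2_mul0l _ _ (by omega),
        show (2*p) * (2*q+1) % 2 = 0 from mod2_mul0l _ _ (by omega),
        pow_zero, pow_one,
        show (((2*p+1:ℕ)):ℤ)/2 = (p:ℤ) from by push_cast; omega,
        show (((2*p:ℕ)):ℤ)/2 = (p:ℤ) from by push_cast; omega,
        show (2*p+1)/2 + 1 = p+1 from by omega,
        show (2*p)/2 + 1 = p+1 from by omega,
        floor_odd q, floor_even q]
      linear_combination (-(m) * ((1+m^2) : ℝ)^(-(((((2*p:ℕ)):ℝ) + (((2*q:ℕ)):ℝ))/2) : ℝ)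
        * ∑ j ∈ Finset.range (p+1), (zchoose (p:ℤ) (j:ℤ) : ℝ)
            * (zchoose ((q:ℤ)-1) (j:ℤ) : ℝ) * (1-(1+m^2)^2)^j) * fact1
    ·
      obtain ⟨q, hq⟩ := hb
      subst hq
      rw [show (-1:ℝ)^(2*p+1+1) = 1 from Even.neg_one_pow (Nat.even_iff.mpr (by omega)),
        show (-1:ℝ)^(2*p+1) = -1 from Odd.neg_one_pow (Nat.odd_iff.mpr (by omega)),
        show (-1:ℝ)^(2*q+1+1) = 1 from Even.neg_one_pow (Nat.even_iff.mpr (by omega)),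
        show (2*p+1) * (2*q+1+1+1) % 2 = 1 from mod2_mul1 _ _ (by omega) (by omega),
        show (2*p+1) * (2*q+1+1) % 2 = 0 from mod2_mul0r _ _ (by omega),
        show (2*p) * (2*q+1+1+1) % 2 = 0 from mod2_mul0l _ _ (by omega),
        show (2*p) * (2*q+1+1) % 2 = 0 from mod2_mul0l _ _ (by omega),
        pow_zero, pow_one,
        show (((2*p+1:ℕ)):ℤ)/2 = (p:ℤ) from by push_cast; omega,
        show (((2*p:ℕ)):ℤ)/2 = (p:ℤ) from by push_cast; omega,
        show (2*p+1)/2 + 1 = p+1 from by omega,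
        show (2*p)/2 + 1 = p+1 from by omega,
        show ((2*q+1+1 : ℕ)) = 2*(q+1) from by ring,
        floor_odd q, floor_even (q+1)]
      rw [show ((q+1:ℕ):ℤ) - 1 = (q:ℤ) from by push_cast; ring]
      linear_combination (m * ((1+m^2) : ℝ)^(-(((((2*p:ℕ)):ℝ) + (((2*q+1:ℕ)):ℝ))/2) : ℝ)
        * ∑ j ∈ Finset.range (p+1), (zchoose (p:ℤ) (j:ℤ) : ℝ)
            * (zchoose (q:ℤ) (j:ℤ) : ℝ) * (1-(1+m^2)^2)^j) * fact1
  · -- a odd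
    obtain ⟨p, hp⟩ := ha
    subst hp
    rcases Nat.even_or_odd b with hb | hb
    · -- Case A (nontrivial) : a = 2p+1, b = 2q
      obtain ⟨q, hq⟩ := hb
      have hq2 : b = 2*q := by omega
      subst hq2
      rw [show (-1:ℝ)^(2*p+1+1+1) = -1 from Odd.neg_one_pow (Nat.odd_iff.mpr (by omega)),
        show (-1:ℝ)^(2*p+1+1) = 1 from Even.neg_one_pow (Nat.even_iff.mpr (by omega)),
        show (-1:ℝ)^(2*q+1) = -1 from Odd.neg_one_pow (Nat.odd_iff.mpr (by omega)),
        show (2*p+1+1) * (2*q+1+1) % 2 = 0 from mod2_mul0l _ _ (by omega),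
        show (2*p+1+1) * (2*q+1) % 2 = 0 from mod2_mul0l _ _ (by omega),
        show (2*p+1) * (2*q+1+1) % 2 = 0 from mod2_mul0r _ _ (by omega),
        show (2*p+1) * (2*q+1) % 2 = 1 from mod2_mul1 _ _ (by omega) (by omega),
        pow_zero, pow_one,
        show (((2*p+1+1:ℕ)):ℤ)/2 = (p:ℤ)+1 from by push_cast; omega,
        show (((2*p+1:ℕ)):ℤ)/2 = (p:ℤ) from by push_cast; omega,
        show (2*p+1+1)/2 + 1 = p+2 from by omega,
        show (2*p+1)/2 + 1 = p+1 from by omega,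
        floor_odd q, floor_even q]
      linear_combination (-(m) * ((1+m^2) : ℝ)^(-(((((2*p+1:ℕ)):ℝ) + (((2*q:ℕ)):ℝ))/2) : ℝ)
          * ((1+m^2)^(-(1/2) : ℝ)) * ((1+m^2)^(-(1/2) : ℝ))) * (keyid p q (1-(1+m^2)^2))
        + (m * (1+m^2) * ((1+m^2) : ℝ)^(-(((((2*p+1:ℕ)):ℝ) + (((2*q:ℕ)):ℝ))/2) : ℝ)
          * ∑ j ∈ Finset.range (p+1), (zchoose (p:ℤ) (j:ℤ) : ℝ)
              * (zchoose ((q:ℤ)-1) (j:ℤ) : ℝ) * (1-(1+m^2)^2)^j) * fact1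
    · -- Case B : a = 2p+1, b = 2q+1
      obtain ⟨q, hq⟩ := hb
      subst hq
      rw [show (-1:ℝ)^(2*p+1+1+1) = -1 from Odd.neg_one_pow (Nat.odd_iff.mpr (by omega)),
        show (-1:ℝ)^(2*p+1+1) = 1 from Even.neg_one_pow (Nat.even_iff.mpr (by omega)),
        show (-1:ℝ)^(2*q+1+1) = 1 from Even.neg_one_pow (Nat.even_iff.mpr (by omega)),
        show (2*p+1+1) * (2*q+1+1+1) % 2 = 0 from mod2_mul0l _ _ (by omega),
        show (2*p+1+1) * (2*q+1+1) % 2 = 0 from mod2_mul0l _ _ (by omega),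
        show (2*p+1) * (2*q+1+1+1) % 2 = 1 from mod2_mul1 _ _ (by omega) (by omega),
        show (2*p+1) * (2*q+1+1) % 2 = 0 from mod2_mul0r _ _ (by omega),
        pow_zero, pow_one,
        show (((2*p+1+1:ℕ)):ℤ)/2 = (p:ℤ)+1 from by push_cast; omega,
        show (((2*p+1:ℕ)):ℤ)/2 = (p:ℤ) from by push_cast; omega,
        show (2*p+1+1)/2 + 1 = p+2 from by omega,
        show (2*p+1)/2 + 1 = p+1 from by omega,
        show ((2*q+1+1 : ℕ)) = 2*(q+1) from by ring,
        floor_odd q, floor_even (q+1)]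
      rw [show ((q+1:ℕ):ℤ) - 1 = (q:ℤ) from by push_cast; ring]
      linear_combination (-(m) * ((1+m^2) : ℝ)^(-(((((2*p+1:ℕ)):ℝ) + (((2*q+1:ℕ)):ℝ))/2) : ℝ)
        * ∑ j ∈ Finset.range (p+1), (zchoose (p:ℤ) (j:ℤ) : ℝ)
            * (zchoose (q:ℤ) (j:ℤ) : ℝ) * (1-(1+m^2)^2)^j) * fact1


-- base values at (1,1)
lemma ka1_base (m : ℝ) : ka1 m 1 (uhom 1) ((1:ℤ):ℝ) ((1:ℕ):ℝ) = 0 := by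
  unfold ka1; rw [kwf_base]; simp

lemma ka2_base (m : ℝ) : ka2 m 1 (uhom 1) ((1:ℤ):ℝ) ((1:ℕ):ℝ) = -1 := by
  unfold ka2; rw [kwf_base]; simp

lemma F_eta0 (m : ℝ) (ξ : ℕ) : ka1 m 1 (uhom 1) ((ξ:ℝ)+1) ((ξ:ℝ)+1) = 0 := by
  cases ξ with
  | zero =>
    have h := ka1_base m
    push_cast at h ⊢
    norm_num at h ⊢
    exact h
  | succ k =>
    have hz1 : ka1 m 1 (uhom 1) (((k:ℤ)+2+1 : ℤ) : ℝ) ((k+1:ℕ):ℝ) = 0 := by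
      unfold ka1
      rw [kwf_vanish_hi m (uhom 1) (k+1) ((k:ℤ)+2+1) (by omega)]
      simp
    have hz2 : ka2 m 1 (uhom 1) (((k:ℤ)+2+1 : ℤ) : ℝ) ((k+1:ℕ):ℝ) = 0 := by
      unfold ka2
      rw [kwf_vanish_hi m (uhom 1) (k+1) ((k:ℤ)+2+1) (by omega)]
      simp
    have h := recur1 m (uhom 1) (n := k+1) (by omega) ((k:ℤ)+2)
    rw [hz1, hz2] at h
    rw [show (((k:ℤ)+2 : ℤ):ℝ) = ((k+1:ℕ):ℝ)+1 from by push_cast; ring] at h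
    rw [h]
    ring

lemma G_xi0 (m : ℝ) (k : ℕ) (hk : 1 ≤ k) :
    ka2 m 1 (uhom 1) (((1 - (k:ℤ)) : ℤ) : ℝ) ((k:ℝ)+1) = 0 := by
  have hz1 : ka1 m 1 (uhom 1) (((1 - (k:ℤ) - 1) : ℤ) : ℝ) ((k:ℕ):ℝ) = 0 := by
    unfold ka1
    rw [show ((1 - (k:ℤ) - 1) : ℤ) = (-(k:ℤ) : ℤ) from by ring, kwf_vanish_lo m (uhom 1) hk]
    simp
  have hz2 : ka2 m 1 (uhom 1) (((1 - (k:ℤ) - 1) : ℤ) : ℝ) ((k:ℕ):ℝ) = 0 := by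
    unfold ka2
    rw [show ((1 - (k:ℤ) - 1) : ℤ) = (-(k:ℤ) : ℤ) from by ring, kwf_vanish_lo m (uhom 1) hk]
    simp
  have h := recur2 m (uhom 1) (n := k) hk (1 - (k:ℤ))
  rw [hz1, hz2] at h
  rw [h]
  ring

lemma rpow_half_succ (m : ℝ) (k : ℕ) :
    ((1+m^2) : ℝ) ^ (-(((k+1:ℕ)):ℝ)/2 : ℝ)
      = (1+m^2)^(-(1/2 : ℝ)) * (1+m^2)^(-((k:ℕ):ℝ)/2 : ℝ) := by
  rw [← Real.rpow_add (by positivity)]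
  congr 1
  push_cast
  ring

lemma F_xi0 (m : ℝ) : ∀ (η : ℕ), 1 ≤ η →
    ka1 m 1 (uhom 1) (((1 - (η:ℤ)) : ℤ) : ℝ) ((η:ℝ)+1)
      = -m * (1 + m^2) ^ (-((η:ℝ))/2 : ℝ) := by
  intro η
  induction η with
  | zero => omega
  | succ k ih =>
    intro _
    have h := recur1 m (uhom 1) (n := k+1) (by omega) (1 - ((k+1:ℕ):ℤ))
    have hu : uhom 1 (((1 - ((k+1:ℕ):ℤ) : ℤ)):ℝ)
        ((k+1:ℕ):ℝ)
        = uhom 1 (((1 - ((k+1:ℕ):ℤ) : ℤ)):ℝ) ((k+1:ℕ):ℝ) := rfl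
    rw [uhom_one_eval ((((1 - ((k+1:ℕ):ℤ) : ℤ)):ℝ) + 1/2) (((k+1:ℕ):ℝ) + 1/2)
      (2*(k:ℤ)+1) (by push_cast; ring), if_neg (by omega)] at h
    rcases Nat.eq_zero_or_pos k with hk0 | hk1
    · subst hk0
      have h1 : ka1 m 1 (uhom 1) (((1 - ((0+1:ℕ):ℤ) + 1 : ℤ)):ℝ) ((0+1:ℕ):ℝ) = 0 := by
        have hb := ka1_base m
        rw [show ((1 - ((0+1:ℕ):ℤ) + 1 : ℤ)) = (1:ℤ) from by norm_num]
        exact hb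
      have h2 : ka2 m 1 (uhom 1) (((1 - ((0+1:ℕ):ℤ) + 1 : ℤ)):ℝ) ((0+1:ℕ):ℝ) = -1 := by
        have hb := ka2_base m
        rw [show ((1 - ((0+1:ℕ):ℤ) + 1 : ℤ)) = (1:ℤ) from by norm_num]
        exact hb
      rw [h1, h2] at h
      rw [h, rpow_half_succ m 0]
      rw [show (-(((0:ℕ)):ℝ)/2 : ℝ) = 0 from by norm_num, Real.rpow_zero]
      ring
    · have h1 : ka1 m 1 (uhom 1) (((1 - ((k+1:ℕ):ℤ) + 1 : ℤ)):ℝ) ((k+1:ℕ):ℝ)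
          = -m * (1 + m^2) ^ (-((k:ℝ))/2 : ℝ) := by
        rw [show ((1 - ((k+1:ℕ):ℤ) + 1 : ℤ)) = (1 - (k:ℤ) : ℤ) from by push_cast; ring,
          show ((k+1:ℕ):ℝ) = (k:ℝ)+1 from by push_cast; ring]
        exact ih hk1
      have h2 : ka2 m 1 (uhom 1) (((1 - ((k+1:ℕ):ℤ) + 1 : ℤ)):ℝ) ((k+1:ℕ):ℝ) = 0 := by
        rw [show ((1 - ((k+1:ℕ):ℤ) + 1 : ℤ)) = (1 - (k:ℤ) : ℤ) from by push_cast; ring,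
          show ((k+1:ℕ):ℝ) = (k:ℝ)+1 from by push_cast; ring]
        exact G_xi0 m k hk1
      rw [h1, h2] at h
      rw [h, rpow_half_succ m k]
      ring

lemma fact_c (m : ℝ) :
    ((1+m^2)^(-(1/2) : ℝ)) * ((1+m^2)^(-(1/2) : ℝ)) * (1+m^2) = 1 := by
  have hC : (0:ℝ) < 1 + m^2 := by positivity
  rw [← Real.rpow_add hC, show ((-(1/2):ℝ) + (-(1/2):ℝ)) = -1 by norm_num,
    Real.rpow_neg (le_of_lt hC), Real.rpow_one]
  exact inv_mul_cancel₀ (ne_of_gt hC)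

lemma main_lemma (m : ℝ) : ∀ ξ η : ℕ,
    ka1 m 1 (uhom 1) ((ξ:ℝ) - η + 1) ((ξ:ℝ) + η + 1) = Phi m ξ η := by
  intro ξ
  induction ξ with
  | zero =>
    intro η
    cases η with
    | zero =>
      rw [Phi_eta_zero]
      have h := ka1_base m
      push_cast at h ⊢
      norm_num at h ⊢
      exact h
    | succ k =>
      have h := F_xi0 m (k+1) (by omega)
      rw [Phi_xi_zero m (k+1) (by omega)]
      rw [show ((0:ℕ):ℝ) - ((k+1:ℕ):ℝ) + 1 = (((1 - ((k+1:ℕ):ℤ)) : ℤ):ℝ) from by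
          push_cast; ring,
        show ((0:ℕ):ℝ) + ((k+1:ℕ):ℝ) + 1 = ((k+1:ℕ):ℝ)+1 from by push_cast; ring]
      exact h
  | succ a iha =>
    intro η
    induction η with
    | zero =>
      rw [Phi_eta_zero]
      have h := F_eta0 m (a+1)
      rw [show ((a+1:ℕ):ℝ) - ((0:ℕ):ℝ) + 1 = ((a+1:ℕ):ℝ)+1 from by push_cast; ring,
        show ((a+1:ℕ):ℝ) + ((0:ℕ):ℝ) + 1 = ((a+1:ℕ):ℝ)+1 from by push_cast; ring]
      exact h
    | succ b ihb =>
      set X : ℤ := (a:ℤ) - b + 1 with hX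
      -- level-(a+b+3) recurrence
      have h1 := recur1 m (uhom 1) (n := a+b+2) (by omega) X
      rw [uhom_one_eval ((X:ℝ)+1/2) (((a+b+2:ℕ):ℝ)+1/2) (2*(b:ℤ)+1)
          (by rw [hX]; push_cast; ring),
        if_neg (by omega)] at h1
      -- level-(a+b+2) recurrences
      have h2 := recur2 m (uhom 1) (n := a+b+1) (by omega) (X+1)
      rw [uhom_one_eval ((((X+1:ℤ)):ℝ) - 1/2) (((a+b+1:ℕ):ℝ)+1/2) (2*(b:ℤ))
          (by rw [hX]; push_cast; ring)] at h2
      have hs2 : (if (4:ℤ) ∣ 2*(b:ℤ) then (-1:ℝ) else 1) = (-1:ℝ)^(b+1) := by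
        rcases Nat.even_or_odd b with hb | hb
        · obtain ⟨k, hk⟩ := hb
          subst hk
          rw [if_pos (by omega), Odd.neg_one_pow (Nat.odd_iff.mpr (by omega))]
        · obtain ⟨k, hk⟩ := hb
          subst hk
          rw [if_neg (by omega), Even.neg_one_pow (Nat.even_iff.mpr (by omega))]
      rw [hs2] at h2
      have h3 := recur1 m (uhom 1) (n := a+b+1) (by omega) (X-1)
      rw [uhom_one_eval ((((X-1:ℤ)):ℝ) + 1/2) (((a+b+1:ℕ):ℝ)+1/2) (2*(b:ℤ)+1)
          (by rw [hX]; push_cast; ring),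
        if_neg (by omega)] at h3
      -- normalize inner integer coordinates
      rw [show (X+1-1 : ℤ) = X from by ring] at h2
      rw [show (X-1+1 : ℤ) = X from by ring] at h3
      -- identify wave function values with Phi via induction hypotheses
      have hP2 : ka1 m 1 (uhom 1) (((X+1 : ℤ)):ℝ) ((a+b+2:ℕ):ℝ) = Phi m (a+1) b := by
        rw [show (((X+1 : ℤ)):ℝ) = ((a+1:ℕ):ℝ) - ((b:ℕ):ℝ) + 1 from by
            rw [hX]; push_cast; ring,
          show ((a+b+2:ℕ):ℝ) = ((a+1:ℕ):ℝ) + ((b:ℕ):ℝ) + 1 from by push_cast; ring]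
        exact ihb
      rw [hP2] at h1
      -- align time coordinate in h2 with h1's atom
      rw [show ((a+b+1:ℕ):ℝ)+1 = ((a+b+2:ℕ):ℝ) from by push_cast; ring] at h2
      -- rewrite ka1 (X) (a+b+1) atoms via iha b
      rw [show ((X:ℤ):ℝ) = ((a:ℕ):ℝ) - ((b:ℕ):ℝ) + 1 from by rw [hX]; push_cast; ring,
        show ((a+b+1:ℕ):ℝ) = ((a:ℕ):ℝ) + ((b:ℕ):ℝ) + 1 from by push_cast; ring,
        iha b] at h2
      -- h3 : LHS is Phi m a (b+1)
      rw [show (((X-1:ℤ)):ℝ) = ((a:ℕ):ℝ) - ((b+1:ℕ):ℝ) + 1 from by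
          rw [hX]; push_cast; ring] at h3
      rw [show ((a+b+1:ℕ):ℝ)+1 = ((a:ℕ):ℝ) + ((b+1:ℕ):ℝ) + 1 from by push_cast; ring] at h3
      rw [show ((X:ℤ):ℝ) = ((a:ℕ):ℝ) - ((b:ℕ):ℝ) + 1 from by rw [hX]; push_cast; ring,
        show ((a+b+1:ℕ):ℝ) = ((a:ℕ):ℝ) + ((b:ℕ):ℝ) + 1 from by push_cast; ring,
        iha b, iha (b+1)] at h3
      -- rewrite the goal to h1's left-hand side
      rw [show ((a+1:ℕ):ℝ) - ((b+1:ℕ):ℝ) + 1 = ((X:ℤ):ℝ) from by rw [hX]; push_cast; ring,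
        show ((a+1:ℕ):ℝ) + ((b+1:ℕ):ℝ) + 1 = ((a+b+2:ℕ):ℝ)+1 from by push_cast; ring,
        h1, h2, Phi_star m a b]
      linear_combination (-( (1+m^2)^(-(1/2):ℝ) * (-1:ℝ)^(b+1) )) * h3
        + (-((-1:ℝ)^(b+1) * Phi m a b)) * fact_c m


/-- Proposition (exact solution, first component). -/
theorem exact_solution_a1 (m : ℝ) (hm : 0 ≤ m) (ξ η : ℕ) :
    ka1 m 1 (uhom 1) ((ξ : ℝ) - η + 1) ((ξ : ℝ) + η + 1)
      = (-1 : ℝ) ^ (ξ + 1) * m * (1 + m ^ 2) ^ ((ξ * (η + 1)) % 2)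
        * (1 + m ^ 2) ^ (-(((ξ : ℝ) + η) / 2))
        * ∑ j ∈ Finset.range (ξ / 2 + 1),
            (zchoose ((ξ : ℤ) / 2) (j : ℤ) : ℝ) * (zchoose ⌊((η : ℝ) - 1) / 2⌋ (j : ℤ) : ℝ)
              * (1 - (1 + m ^ 2) ^ 2) ^ j := by
  have h := main_lemma m ξ η
  unfold Phi at h
  exact h
end

section
/- For each real m ≥ 0 and all integers ξ ≥ 0, η ≥ 1, setting z := 1 − (1+m²)²: a₁(ξ−η+1, ξ+η+1, m, 1, u₁) = (−1)^{ξ+1} · m · (1+m²)^{−(ξ+η)/2 + δ₂((1+η)ξ)} · ₂F₁(−⌊(η−1)/2⌋, −⌊ξ/2⌋; 1; z). -/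
open scoped BigOperators

namespace FCaux

lemma extd_snoc_lt {n : ℕ} (d : Fin n → Bool) (b : Bool) {k : ℕ} (h : k < n) :
    extd (Fin.snoc d b : Fin (n+1) → Bool) k = extd d k := by
  have h' : k < n + 1 := Nat.lt_succ_of_lt h
  have : (⟨k, h'⟩ : Fin (n+1)) = Fin.castSucc ⟨k, h⟩ := rfl
  rw [extd, extd, dif_pos h', dif_pos h, this, Fin.snoc_castSucc]

lemma extd_snoc_last {n : ℕ} (d : Fin n → Bool) (b : Bool) :
    extd (Fin.snoc d b : Fin (n+1) → Bool) n = b := by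
  have h' : n < n + 1 := Nat.lt_succ_self n
  have : (⟨n, h'⟩ : Fin (n+1)) = Fin.last n := rfl
  simp [extd, h', this]

lemma pathPos_snoc {n : ℕ} (d : Fin n → Bool) (b : Bool) {k : ℕ} (h : k ≤ n) :
    pathPos (Fin.snoc d b : Fin (n+1) → Bool) k = pathPos d k := by
  unfold pathPos
  refine Finset.sum_congr rfl fun i hi => ?_
  rw [extd_snoc_lt d b (lt_of_lt_of_le (Finset.mem_range.mp hi) h)]

lemma pathPos_snoc_succ {n : ℕ} (d : Fin n → Bool) (b : Bool) :
    pathPos (Fin.snoc d b : Fin (n+1) → Bool) (n+1) = pathPos d n + dirZ b := by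
  unfold pathPos
  rw [Finset.sum_range_succ, extd_snoc_last]
  congr 1
  exact pathPos_snoc d b le_rfl

lemma pathTurns_snoc {n : ℕ} (d : Fin n → Bool) (b : Bool) :
    pathTurns (Fin.snoc d b : Fin (n+1) → Bool)
      = pathTurns d + (if 0 < n ∧ extd d (n-1) ≠ b then 1 else 0) := by
  unfold pathTurns
  rw [Finset.range_add_one, Finset.filter_insert]
  have hfilter : (Finset.range n).filter
      (fun k => 0 < k ∧ extd (Fin.snoc d b : Fin (n+1) → Bool) (k - 1)
        ≠ extd (Fin.snoc d b : Fin (n+1) → Bool) k)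
      = (Finset.range n).filter (fun k => 0 < k ∧ extd d (k - 1) ≠ extd d k) := by
    apply Finset.filter_congr
    intro k hk
    have hk' := Finset.mem_range.mp hk
    rw [extd_snoc_lt d b hk', extd_snoc_lt d b (lt_of_le_of_lt (Nat.sub_le k 1) hk')]
  by_cases hcond : 0 < n ∧ extd (Fin.snoc d b : Fin (n+1) → Bool) (n - 1)
      ≠ extd (Fin.snoc d b : Fin (n+1) → Bool) n
  · rw [if_pos hcond, Finset.card_insert_of_notMem (by simp), hfilter]
    have hn : 0 < n := hcond.1
    have : extd d (n-1) ≠ b := by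
      have h1 := extd_snoc_lt d b (k := n-1) (Nat.sub_lt hn one_pos)
      have h2 := extd_snoc_last d b
      rw [h1, h2] at hcond
      exact hcond.2
    rw [if_pos ⟨hn, this⟩]
  · rw [if_neg hcond, hfilter]
    have : ¬ (0 < n ∧ extd d (n-1) ≠ b) := by
      intro ⟨hn, hne⟩
      apply hcond
      refine ⟨hn, ?_⟩
      rw [extd_snoc_lt d b (Nat.sub_lt hn one_pos), extd_snoc_last]
      exact hne
    rw [if_neg this, add_zero]

end FCaux


namespace FCaux

/-- value of the homogeneous field on the step from `(x,k)` in direction `b`. -/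
noncomputable def ustep (x : ℤ) (k : ℕ) (b : Bool) : ℝ :=
  if b = true ∧ (4:ℤ) ∣ ((k:ℤ) - x) then -1 else 1

lemma pathPos_parity {n : ℕ} (d : Fin n → Bool) (k : ℕ) :
    (2:ℤ) ∣ ((k:ℤ) - pathPos d k) := by
  induction k with
  | zero => simp [pathPos]
  | succ k ih =>
      have : pathPos d (k+1) = pathPos d k + dirZ (extd d k) := Finset.sum_range_succ _ _
      rw [this]
      rcases ih with ⟨c, hc⟩
      cases hb : extd d k <;> simp only [dirZ, hb] <;>
        [ (exact ⟨c+1, by push_cast; linarith⟩) ; (exact ⟨c, by push_cast; linarith⟩) ]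

lemma uhom_eval (x : ℤ) (k : ℕ) (b : Bool) (hpar : (2:ℤ) ∣ ((k:ℤ) - x)) :
    uhom 1 ((x:ℝ) + (dirZ b : ℝ) / 2) ((k:ℝ) + 1 / 2) = ustep x k b := by
  unfold uhom ustep
  cases b with
  | true =>
      have harg : ((k:ℝ) + 1/2) - ((x:ℝ) + (dirZ true : ℝ)/2) = ((k - x : ℤ) : ℝ) := by
        simp only [dirZ, if_true, if_false, Bool.false_eq_true]; push_cast; ring
      by_cases hdvd : (4:ℤ) ∣ ((k:ℤ) - x)
      · rcases hdvd with ⟨c, hc⟩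
        rw [if_pos ⟨c, by rw [harg, hc]; push_cast; try ring⟩, if_pos ⟨rfl, ⟨c, hc⟩⟩]
      · rw [if_neg, if_neg (by rintro ⟨-, h⟩; exact hdvd h)]
        rintro ⟨c, hc⟩
        rw [harg] at hc
        exact hdvd ⟨c, by exact_mod_cast hc⟩
  | false =>
      have harg : ((k:ℝ) + 1/2) - ((x:ℝ) + (dirZ false : ℝ)/2) = ((k - x + 1 : ℤ) : ℝ) := by
        simp only [dirZ, if_true, if_false, Bool.false_eq_true]; push_cast; ring
      rw [if_neg, if_neg (by rintro ⟨h, -⟩; exact Bool.false_ne_true h)]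
      rintro ⟨c, hc⟩
      rw [harg] at hc
      have h4 : ((k:ℤ) - x + 1) = 4 * c := by exact_mod_cast hc
      rcases hpar with ⟨e, he⟩
      omega

end FCaux

namespace FCaux

/-- complex weight of a path. -/
noncomputable def pw (m : ℝ) {n : ℕ} (d : Fin n → Bool) : ℂ :=
  (-(Complex.I) * m) ^ (pathTurns d) *
    ∏ k ∈ Finset.range n, ((ustep (pathPos d k) k (extd d k) : ℝ) : ℂ)

/-- path sum restricted by the final direction. -/
noncomputable def Wlast (m : ℝ) (n : ℕ) (x : ℤ) (b : Bool) : ℂ :=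
  ∑ d ∈ Finset.univ.filter
      (fun d : Fin n → Bool => extd d 0 = true ∧ pathPos d n = x ∧ extd d (n-1) = b),
    pw m d

lemma pw_snoc (m : ℝ) {n : ℕ} (hn : 1 ≤ n) (d : Fin n → Bool) (b : Bool) :
    pw m (Fin.snoc d b : Fin (n+1) → Bool)
      = ((if extd d (n-1) ≠ b then (-(Complex.I) * m) else 1) *
          ((ustep (pathPos d n) n b : ℝ) : ℂ)) * pw m d := by
  unfold pw
  rw [pathTurns_snoc, Finset.prod_range_succ]
  have h1 : ∀ k ∈ Finset.range n,
      ((ustep (pathPos (Fin.snoc d b : Fin (n+1) → Bool) k) k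
        (extd (Fin.snoc d b : Fin (n+1) → Bool) k) : ℝ) : ℂ)
      = ((ustep (pathPos d k) k (extd d k) : ℝ) : ℂ) := by
    intro k hk
    have hk' := Finset.mem_range.mp hk
    rw [extd_snoc_lt d b hk', pathPos_snoc d b (le_of_lt hk')]
  rw [Finset.prod_congr rfl h1, pathPos_snoc d b le_rfl, extd_snoc_last,
    pow_add]
  have h2 : (-(Complex.I) * m) ^ (if 0 < n ∧ extd d (n-1) ≠ b then 1 else 0)
      = (if extd d (n-1) ≠ b then (-(Complex.I) * m) else 1) := by
    by_cases h : extd d (n-1) ≠ b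
    · rw [if_pos ⟨hn, h⟩, if_pos h, pow_one]
    · rw [if_neg (by tauto), if_neg h, pow_zero]
  rw [h2]; ring

lemma Wlast_succ (m : ℝ) (n : ℕ) (hn : 1 ≤ n) (x : ℤ) (b : Bool) :
    Wlast m (n+1) x b
      = ((ustep (x - dirZ b) n b : ℝ) : ℂ) *
          (Wlast m n (x - dirZ b) b + (-(Complex.I) * m) * Wlast m n (x - dirZ b) (!b)) := by
  classical
  unfold Wlast
  simp only [Finset.sum_filter]
  rw [← Equiv.sum_comp (Fin.snocEquiv (fun _ => Bool))]
  rw [Fintype.sum_prod_type]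
  have he : ∀ (c : Bool) (d : Fin n → Bool),
      (Fin.snocEquiv (fun _ : Fin (n+1) => Bool)) (c, d) = (Fin.snoc d c : Fin (n+1) → Bool) :=
    fun c d => rfl
  simp only [he, Nat.add_sub_cancel]
  have hcond : ∀ (c : Bool) (d : Fin n → Bool),
      (extd (Fin.snoc d c : Fin (n+1) → Bool) 0 = true ∧
        pathPos (Fin.snoc d c : Fin (n+1) → Bool) (n+1) = x ∧
        extd (Fin.snoc d c : Fin (n+1) → Bool) n = b)
      ↔ (extd d 0 = true ∧ pathPos d n = x - dirZ c ∧ c = b) := by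
    intro c d
    rw [extd_snoc_lt d c hn, pathPos_snoc_succ, extd_snoc_last]
    constructor
    · rintro ⟨h1, h2, h3⟩; exact ⟨h1, by omega, h3⟩
    · rintro ⟨h1, h2, h3⟩; exact ⟨h1, by omega, h3⟩
  simp only [hcond]
  rw [Fintype.sum_bool]
  have hzero : ∀ (c : Bool), c ≠ b →
      (∑ d : Fin n → Bool,
        if extd d 0 = true ∧ pathPos d n = x - dirZ c ∧ c = b
        then pw m (Fin.snoc d c : Fin (n+1) → Bool) else 0) = 0 := by
    intro c hc
    refine Finset.sum_eq_zero fun d _ => ?_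
    rw [if_neg (by tauto)]
  have hmain : (∑ d : Fin n → Bool,
        if extd d 0 = true ∧ pathPos d n = x - dirZ b ∧ b = b
        then pw m (Fin.snoc d b : Fin (n+1) → Bool) else 0)
      = ((ustep (x - dirZ b) n b : ℝ) : ℂ) *
          ((∑ d : Fin n → Bool,
              if extd d 0 = true ∧ pathPos d n = x - dirZ b ∧ extd d (n-1) = b
              then pw m d else 0)
            + (-(Complex.I) * m) *
              (∑ d : Fin n → Bool,
                if extd d 0 = true ∧ pathPos d n = x - dirZ b ∧ extd d (n-1) = !b
                then pw m d else 0)) := by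
    rw [mul_add, Finset.mul_sum, Finset.mul_sum, Finset.mul_sum, ← Finset.sum_add_distrib]
    refine Finset.sum_congr rfl fun d _ => ?_
    rw [pw_snoc m hn d b]
    by_cases hA : extd d 0 = true
    · by_cases hB : pathPos d n = x - dirZ b
      · by_cases hl : extd d (n-1) = b
        · have hnb : ¬ (extd d (n-1) = !b) := by simp [hl]
          have hbb : (b = !b) = False := by simp
          simp only [hA, hB, hl, hnb, hbb, true_and, and_true, and_false, ne_eq,
            not_true_eq_false, eq_self_iff_true, if_true, if_false, ite_true, ite_false]
          ring
        · have hnb : extd d (n-1) = !b := by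
            cases b <;> cases h' : extd d (n-1) <;> simp_all
          have hbb : ((!b) = !b) = True := by simp
          have hbc : ((!b) = b) = False := eq_false (Bool.not_ne_self b)
          simp only [hA, hB, hl, hnb, hbb, hbc, true_and, and_true, and_false, ne_eq,
            not_false_eq_true, eq_self_iff_true, if_true, if_false, ite_true, ite_false]
          ring
      · simp only [hA, eq_false hB, true_and, and_false, false_and, if_false, ite_false]
        ring
    · simp only [eq_false hA, false_and, if_false, ite_false]
      ring
  cases b with
  | true => rw [hzero false (by simp), hmain, add_zero]
  | false => rw [hzero true (by simp), hmain, zero_add]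

end FCaux

namespace FCaux

lemma extd_zero_fin0 (d : Fin 0 → Bool) (k : ℕ) : extd d k = false := by
  unfold extd; rw [dif_neg (by omega)]

lemma Wlast_zero (m : ℝ) (x : ℤ) (b : Bool) : Wlast m 0 x b = 0 := by
  unfold Wlast
  rw [Finset.sum_filter]
  refine Finset.sum_eq_zero fun d _ => ?_
  rw [if_neg]
  rintro ⟨h, -⟩
  rw [extd_zero_fin0] at h
  exact Bool.false_ne_true h

lemma Wlast_one (m : ℝ) (x : ℤ) (b : Bool) :
    Wlast m 1 x b = if b = true ∧ x = 1 then (-1 : ℂ) else 0 := by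
  classical
  unfold Wlast
  rw [Finset.sum_filter, ← Equiv.sum_comp (Equiv.funUnique (Fin 1) Bool).symm,
    Fintype.sum_bool]
  have key : ∀ c : Bool, ((Equiv.funUnique (Fin 1) Bool).symm c) = (fun _ : Fin 1 => c) :=
    fun c => rfl
  have hext : ∀ c : Bool, extd (fun _ : Fin 1 => c) 0 = c := fun c => rfl
  have hpos : ∀ c : Bool, pathPos (fun _ : Fin 1 => c) 1 = dirZ c := by
    intro c; unfold pathPos; rw [Finset.sum_range_one, hext]
  have hturn : ∀ c : Bool, pathTurns (fun _ : Fin 1 => c) = 0 := by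
    intro c; simp [pathTurns, Finset.range_one, Finset.filter_singleton]
  have hpw : ∀ c : Bool, pw m (fun _ : Fin 1 => c) = ((ustep 0 0 c : ℝ) : ℂ) := by
    intro c
    unfold pw
    rw [hturn, pow_zero, one_mul, Finset.prod_range_one]
    have h0 : pathPos (fun _ : Fin 1 => c) 0 = 0 := by simp [pathPos]
    rw [h0, hext]
  simp only [key, hext, hpos, hpw]
  cases b with
  | true =>
      by_cases hx : x = 1
      · subst hx
        norm_num [dirZ, ustep]
      · rw [if_neg (by rintro ⟨-, h, -⟩; simp [dirZ] at h; omega),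
          if_neg (by rintro ⟨h, -⟩; exact Bool.false_ne_true h),
          if_neg (by rintro ⟨-, h⟩; exact hx h)]
        norm_num
  | false =>
      norm_num

noncomputable def PQ (m : ℝ) : ℕ → ℤ → ℝ × ℝ
  | 0, _ => (0, 0)
  | 1, x => (if x = 1 then -1 else 0, 0)
  | (n+2), x =>
      (ustep (x-1) (n+1) true * ((PQ m (n+1) (x-1)).1 - m^2 * (PQ m (n+1) (x-1)).2),
       (PQ m (n+1) (x+1)).1 + (PQ m (n+1) (x+1)).2)

lemma Wlast_eval (m : ℝ) : ∀ (n : ℕ) (x : ℤ),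
    Wlast m n x true = (((PQ m n x).1 : ℝ) : ℂ) ∧
    Wlast m n x false = (-(Complex.I) * m) * (((PQ m n x).2 : ℝ) : ℂ) := by
  intro n
  induction n with
  | zero => intro x; simp [Wlast_zero, PQ]
  | succ n ih =>
      cases n with
      | zero =>
          intro x
          constructor
          · rw [Wlast_one, PQ]
            by_cases hx : x = 1 <;> simp [hx]
          · rw [Wlast_one, PQ]
            simp
      | succ k =>
          intro x
          have h1 : 1 ≤ k + 1 := Nat.le_add_left 1 k
          constructor
          · rw [Wlast_succ m (k+1) h1 x true]
            have hd : dirZ true = 1 := rfl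
            rw [hd, Bool.not_true, (ih (x-1)).1, (ih (x-1)).2]
            show _ = (((PQ m (k+2) x).1 : ℝ) : ℂ)
            rw [PQ]
            push_cast
            ring_nf
            rw [Complex.I_sq]
            ring
          · rw [Wlast_succ m (k+1) h1 x false]
            have hd : dirZ false = -1 := rfl
            have hu : ustep (x + 1) (k+1) false = 1 := by
              rw [ustep, if_neg (by simp)]
            rw [hd, Bool.not_false, sub_neg_eq_add, hu, (ih (x+1)).1, (ih (x+1)).2]
            show _ = _ * (((PQ m (k+2) x).2 : ℝ) : ℂ)
            rw [PQ]
            push_cast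
            ring

end FCaux

namespace FCaux

noncomputable def Fh (w : ℝ) (j q : ℕ) : ℝ :=
  ∑ k ∈ Finset.range (j+1), (j.choose k : ℝ) * (q.choose k : ℝ) * w^k

lemma Fh_ext (w : ℝ) (j q N : ℕ) (hN : j+1 ≤ N) :
    Fh w j q = ∑ k ∈ Finset.range N, (j.choose k : ℝ) * (q.choose k : ℝ) * w^k := by
  refine Finset.sum_subset (Finset.range_subset_range.mpr hN) fun k _ hk => ?_
  have : j < k := by
    rcases Nat.lt_or_ge k (j+1) with h | h
    · exact absurd (Finset.mem_range.mpr h) hk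
    · omega
  rw [Nat.choose_eq_zero_of_lt this]
  norm_num

lemma Fh_e_zero (w : ℝ) (q : ℕ) : Fh w 0 q = 1 := by
  simp [Fh]

lemma Fh_q_zero (w : ℝ) (j : ℕ) : Fh w j 0 = 1 := by
  rw [Fh, Finset.sum_eq_single 0]
  · simp
  · intro k _ hk
    rw [Nat.choose_eq_zero_of_lt (by omega : 0 < k)]
    norm_num
  · intro h
    exact absurd (Finset.mem_range.mpr (by omega)) h

lemma pascal_sum (w : ℝ) (j r : ℕ) :
    Fh w (j+1) (r+1) - Fh w j (r+1) - Fh w (j+1) r + Fh w j r = w * Fh w j r := by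
  have h1 : Fh w j (r+1)
      = ∑ k ∈ Finset.range (j+2), (j.choose k : ℝ) * ((r+1).choose k : ℝ) * w^k :=
    Fh_ext w j (r+1) (j+2) (by omega)
  have h2 : Fh w j r
      = ∑ k ∈ Finset.range (j+2), (j.choose k : ℝ) * (r.choose k : ℝ) * w^k :=
    Fh_ext w j r (j+2) (by omega)
  rw [h1, h2, Fh, Fh]
  show (∑ k ∈ Finset.range (j+1+1), _) - _ - (∑ k ∈ Finset.range (j+1+1), _) + _ = _
  rw [← Finset.sum_sub_distrib, ← Finset.sum_sub_distrib, ← Finset.sum_add_distrib,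
    Finset.mul_sum]
  rw [Finset.sum_range_succ' _ (j+1), Finset.sum_range_succ _ (j+1)]
  rw [Nat.choose_succ_self j]
  push_cast
  rw [show (w * ((0:ℝ) * (r.choose (j+1) : ℝ) * w ^ (j+1))) = 0 by ring, add_zero]
  rw [show (((j+1).choose 0 : ℝ) * ((r+1).choose 0 : ℝ) * w^0
      - (j.choose 0 : ℝ) * ((r+1).choose 0 : ℝ) * w^0
      - ((j+1).choose 0 : ℝ) * (r.choose 0 : ℝ) * w^0
      + (j.choose 0 : ℝ) * (r.choose 0 : ℝ) * w^0) = 0 by norm_num, add_zero]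
  refine Finset.sum_congr rfl fun k _ => ?_
  push_cast [Nat.choose_succ_succ]
  ring

end FCaux

namespace FCaux

noncomputable def Qc (m : ℝ) (ξ η : ℕ) : ℝ :=
  if η = 0 then 0 else
    (-1:ℝ)^(ξ+1) * (1+m^2)^(((1+η)*ξ) % 2) * Fh (1-(1+m^2)^2) ((η-1)/2) (ξ/2)

noncomputable def Pc (m : ℝ) (ξ η : ℕ) : ℝ := Qc m ξ (η+1) - Qc m ξ η

lemma Qc_eval (m : ℝ) (ξ η : ℕ) (hη : η ≠ 0) (e d q : ℕ)
    (he : (η-1)/2 = e) (hd : ((1+η)*ξ) % 2 = d) (hq : ξ/2 = q) :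
    Qc m ξ η = (-1:ℝ)^(ξ+1) * (1+m^2)^d * Fh (1-(1+m^2)^2) e q := by
  rw [Qc, if_neg hη, he, hd, hq]

lemma mod2_mul_eq (a b c1 c2 : ℕ) (h1 : a % 2 = c1) (h2 : b % 2 = c2) :
    (a*b) % 2 = (c1*c2) % 2 := by rw [Nat.mul_mod, h1, h2]

lemma Qc_zero (m : ℝ) (ξ : ℕ) : Qc m ξ 0 = 0 := by rw [Qc, if_pos rfl]

lemma Pc_zero_zero (m : ℝ) : Pc m 0 0 = -1 := by
  rw [Pc, Qc_zero, Qc_eval m 0 1 one_ne_zero 0 0 0 (by omega) (by omega) (by omega),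
    Fh_e_zero]
  norm_num

lemma Pc_zero_left (m : ℝ) (η : ℕ) (hη : 1 ≤ η) : Pc m 0 η = 0 := by
  rw [Pc, Qc_eval m 0 (η+1) (by omega) (η/2) 0 0 (by omega) (by simp) (by omega),
    Qc_eval m 0 η (by omega) ((η-1)/2) 0 0 (by omega) (by simp) (by omega),
    Fh_q_zero, Fh_q_zero]
  ring

lemma Pc_step (m : ℝ) (ξ η : ℕ) :
    Pc m (ξ+1) η = (if Even η then (-1:ℝ) else 1) * (Pc m ξ η - m^2 * Qc m ξ η) := by
  unfold Pc
  rcases Nat.even_or_odd η with hE | hO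
  · rw [if_pos hE]
    obtain ⟨j, hj⟩ := hE
    rcases Nat.eq_zero_or_pos η with h0 | hpos
    · subst h0
      rw [Qc_zero, Qc_zero,
        Qc_eval m (ξ+1) 1 one_ne_zero 0 0 ((ξ+1)/2) (by omega) (by omega) rfl,
        Qc_eval m ξ 1 one_ne_zero 0 0 (ξ/2) (by omega) (by omega) rfl,
        Fh_e_zero, Fh_e_zero]
      ring
    · -- η = 2j', j ≥ 1 : write η = 2*j0+2
      obtain ⟨j0, hj0⟩ : ∃ j0, η = 2*j0 + 2 := ⟨j - 1, by omega⟩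
      rcases Nat.even_or_odd ξ with ⟨r, hr⟩ | ⟨r, hr⟩
      · -- ξ = 2r
        rw [Qc_eval m (ξ+1) (η+1) (by omega) (j0+1) 0 r (by omega)
              ((mod2_mul_eq _ _ 0 1 (by omega) (by omega)).trans (by norm_num)) (by omega),
            Qc_eval m (ξ+1) η (by omega) j0 1 r (by omega)
              ((mod2_mul_eq _ _ 1 1 (by omega) (by omega)).trans (by norm_num)) (by omega),
            Qc_eval m ξ (η+1) (by omega) (j0+1) 0 r (by omega)
              ((mod2_mul_eq _ _ 0 0 (by omega) (by omega)).trans (by norm_num)) (by omega),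
            Qc_eval m ξ η (by omega) j0 0 r (by omega)
              ((mod2_mul_eq _ _ 1 0 (by omega) (by omega)).trans (by norm_num)) (by omega)]
        ring
      · -- ξ = 2r+1
        rw [Qc_eval m (ξ+1) (η+1) (by omega) (j0+1) 0 (r+1) (by omega)
              ((mod2_mul_eq _ _ 0 0 (by omega) (by omega)).trans (by norm_num)) (by omega),
            Qc_eval m (ξ+1) η (by omega) j0 0 (r+1) (by omega)
              ((mod2_mul_eq _ _ 1 0 (by omega) (by omega)).trans (by norm_num)) (by omega),
            Qc_eval m ξ (η+1) (by omega) (j0+1) 0 r (by omega)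
              ((mod2_mul_eq _ _ 0 1 (by omega) (by omega)).trans (by norm_num)) (by omega),
            Qc_eval m ξ η (by omega) j0 1 r (by omega)
              ((mod2_mul_eq _ _ 1 1 (by omega) (by omega)).trans (by norm_num)) (by omega)]
        linear_combination ((-1:ℝ)^(ξ+1+1)) * pascal_sum (1-(1+m^2)^2) j0 r
  · rw [if_neg (by rw [Nat.even_iff]; rcases hO with ⟨j, hj⟩; omega)]
    obtain ⟨j, hj⟩ := hO
    rcases Nat.even_or_odd ξ with ⟨r, hr⟩ | ⟨r, hr⟩
    · rw [Qc_eval m (ξ+1) (η+1) (by omega) j 1 r (by omega)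
            ((mod2_mul_eq _ _ 1 1 (by omega) (by omega)).trans (by norm_num)) (by omega),
          Qc_eval m (ξ+1) η (by omega) j 0 r (by omega)
            ((mod2_mul_eq _ _ 0 1 (by omega) (by omega)).trans (by norm_num)) (by omega),
          Qc_eval m ξ (η+1) (by omega) j 0 r (by omega)
            ((mod2_mul_eq _ _ 1 0 (by omega) (by omega)).trans (by norm_num)) (by omega),
          Qc_eval m ξ η (by omega) j 0 r (by omega)
            ((mod2_mul_eq _ _ 0 0 (by omega) (by omega)).trans (by norm_num)) (by omega)]
      ring
    · rw [Qc_eval m (ξ+1) (η+1) (by omega) j 0 (r+1) (by omega)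
            ((mod2_mul_eq _ _ 1 0 (by omega) (by omega)).trans (by norm_num)) (by omega),
          Qc_eval m (ξ+1) η (by omega) j 0 (r+1) (by omega)
            ((mod2_mul_eq _ _ 0 0 (by omega) (by omega)).trans (by norm_num)) (by omega),
          Qc_eval m ξ (η+1) (by omega) j 1 r (by omega)
            ((mod2_mul_eq _ _ 1 1 (by omega) (by omega)).trans (by norm_num)) (by omega),
          Qc_eval m ξ η (by omega) j 0 r (by omega)
            ((mod2_mul_eq _ _ 0 1 (by omega) (by omega)).trans (by norm_num)) (by omega)]
      ring

end FCaux

namespace FCaux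

lemma PQ_zero (m : ℝ) : ∀ (n : ℕ) (x : ℤ),
    ((n:ℤ) < x ∨ x < 2 - n ∨ ¬ ((2:ℤ) ∣ (n - x))) → PQ m n x = (0, 0) := by
  intro n
  induction n with
  | zero => intro x _; rfl
  | succ n ih =>
      cases n with
      | zero =>
          intro x h
          have hx : x ≠ 1 := by
            rintro rfl
            rcases h with h | h | h
            · omega
            · omega
            · exact h ⟨0, by norm_num⟩
          rw [PQ, if_neg hx]
      | succ k =>
          intro x h
          have h1 : ((k+1:ℕ):ℤ) < x-1 ∨ x-1 < 2 - (k+1:ℕ) ∨ ¬ ((2:ℤ) ∣ ((k+1:ℕ) - (x-1))) := by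
            push_cast at h ⊢; omega
          have h2 : ((k+1:ℕ):ℤ) < x+1 ∨ x+1 < 2 - (k+1:ℕ) ∨ ¬ ((2:ℤ) ∣ ((k+1:ℕ) - (x+1))) := by
            push_cast at h ⊢; omega
          show PQ m (k+2) x = (0,0)
          rw [PQ, ih (x-1) h1, ih (x+1) h2]
          norm_num

lemma PQ_eval (m : ℝ) : ∀ (ξ η : ℕ), PQ m (ξ+η+1) ((ξ:ℤ) - η + 1) = (Pc m ξ η, Qc m ξ η) := by
  suffices H : ∀ N ξ η, ξ + η = N → PQ m (ξ+η+1) ((ξ:ℤ) - η + 1) = (Pc m ξ η, Qc m ξ η) by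
    exact fun ξ η => H (ξ+η) ξ η rfl
  intro N
  induction N with
  | zero =>
      intro ξ η hN
      obtain ⟨rfl, rfl⟩ : ξ = 0 ∧ η = 0 := by omega
      show PQ m 1 1 = _
      rw [PQ, if_pos rfl, Pc_zero_zero, Qc_zero]
  | succ N ih =>
      intro ξ η hN
      have hco : ξ + η + 1 = N + 2 := by omega
      rw [hco]
      show PQ m (N+2) ((ξ:ℤ) - η + 1) = _
      rw [PQ]
      -- second component
      have hQ : (PQ m (N+1) ((ξ:ℤ) - η + 1 + 1)).1 + (PQ m (N+1) ((ξ:ℤ) - η + 1 + 1)).2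
          = Qc m ξ η := by
        cases η with
        | zero =>
            rw [PQ_zero m (N+1) _ (by push_cast; omega)]
            rw [Qc_zero]
            norm_num
        | succ η' =>
            have hx : (ξ:ℤ) - (η'+1:ℕ) + 1 + 1 = (ξ:ℤ) - η' + 1 := by push_cast; ring
            have hn : N + 1 = ξ + η' + 1 := by omega
            rw [hx, hn, ih ξ η' (by omega)]
            show Pc m ξ η' + Qc m ξ η' = _
            rw [Pc]
            have : Qc m ξ (η'+1) = Qc m ξ (η'+1) := rfl
            ring
      -- first component
      have hP : ustep ((ξ:ℤ) - η + 1 - 1) (N+1) true *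
            ((PQ m (N+1) ((ξ:ℤ) - η + 1 - 1)).1 - m^2 * (PQ m (N+1) ((ξ:ℤ) - η + 1 - 1)).2)
          = Pc m ξ η := by
        cases ξ with
        | zero =>
            rw [PQ_zero m (N+1) _ (by push_cast; omega)]
            have hη : η = N + 1 := by omega
            rw [Pc_zero_left m η (by omega)]
            norm_num
        | succ ξ' =>
            have hx : ((ξ'+1:ℕ):ℤ) - η + 1 - 1 = (ξ':ℤ) - η + 1 := by push_cast; ring
            have hn : N + 1 = ξ' + η + 1 := by omega
            rw [hx, hn, ih ξ' η (by omega)]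
            have hu : ustep ((ξ':ℤ) - η + 1) (ξ'+η+1) true
                = (if Even η then (-1:ℝ) else 1) := by
              rw [ustep]
              have hiff : ((4:ℤ) ∣ ((ξ'+η+1:ℕ):ℤ) - ((ξ':ℤ) - η + 1)) ↔ Even η := by
                rw [Nat.even_iff]; push_cast; omega
              by_cases hE : Even η
              · rw [if_pos ⟨rfl, hiff.mpr hE⟩, if_pos hE]
              · rw [if_neg (fun hc => hE (hiff.mp hc.2)), if_neg hE]
            rw [hu, ← Pc_step m ξ' η]
      rw [Prod.mk.injEq]
      exact ⟨hP, hQ⟩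

end FCaux


namespace FCaux

lemma kwf_eval (m : ℝ) (x : ℤ) (n : ℕ) :
    kwf m 1 (uhom 1) (x:ℝ) (n:ℝ)
      = (((1 + m^2) ^ ((1 - (n:ℝ)) / 2) : ℝ) : ℂ) *
          (Complex.I * (Wlast m n x true + Wlast m n x false)) := by
  unfold kwf
  have hn : (⌊(n:ℝ) / 1⌋).toNat = n := by
    rw [div_one, Int.floor_natCast, Int.toNat_natCast]
  have hx : ⌊(x:ℝ) / 1⌋ = x := by rw [div_one, Int.floor_intCast]
  rw [hn, hx, show ((1:ℝ):ℂ) = 1 from Complex.ofReal_one]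
  have hf : ∀ d : Fin n → Bool,
      (-(Complex.I) * (m * 1)) ^ (pathTurns d) *
        ∏ k ∈ Finset.range n,
          ((uhom 1 (1 * (pathPos d k : ℝ) + 1 * ((dirZ (extd d k) : ℤ) : ℝ) / 2)
            (1 * (k:ℝ) + 1 / 2) : ℝ) : ℂ)
      = pw m d := by
    intro d
    unfold pw
    rw [mul_one]
    congr 1
    refine Finset.prod_congr rfl fun k _ => ?_
    rw [one_mul, one_mul, one_mul, uhom_eval (pathPos d k) k (extd d k) (pathPos_parity d k)]
  have hsplit :
      (∑ d ∈ Finset.univ.filter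
          (fun d : Fin n → Bool => extd d 0 = true ∧ pathPos d n = x),
        (-(Complex.I) * (m * 1)) ^ (pathTurns d) *
          ∏ k ∈ Finset.range n,
            ((uhom 1 (1 * (pathPos d k : ℝ) + 1 * ((dirZ (extd d k) : ℤ) : ℝ) / 2)
              (1 * (k:ℝ) + 1 / 2) : ℝ) : ℂ))
      = Wlast m n x true + Wlast m n x false := by
    rw [← Finset.sum_filter_add_sum_filter_not
      (Finset.univ.filter (fun d : Fin n → Bool => extd d 0 = true ∧ pathPos d n = x))
      (fun d => extd d (n-1) = true)]
    congr 1
    · rw [Finset.filter_filter, Wlast]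
      refine Finset.sum_congr (Finset.filter_congr fun d _ => by tauto) fun d _ => hf d
    · rw [Finset.filter_filter, Wlast]
      refine Finset.sum_congr (Finset.filter_congr fun d _ => ?_) fun d _ => hf d
      simp only [Bool.not_eq_true]
      tauto
  rw [hsplit, mul_assoc]
  norm_num

lemma ka1_eval (m : ℝ) (x : ℤ) (n : ℕ) :
    (kwf m 1 (uhom 1) (x:ℝ) (n:ℝ)).re
      = (1 + m^2) ^ ((1 - (n:ℝ)) / 2) * (m * (PQ m n x).2) := by
  rw [kwf_eval, (Wlast_eval m n x).1, (Wlast_eval m n x).2]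
  have : (Complex.I * ((((PQ m n x).1:ℝ):ℂ) + -(Complex.I) * (m:ℝ) * (((PQ m n x).2:ℝ):ℂ)))
      = (((m * (PQ m n x).2 : ℝ)):ℂ) + (((PQ m n x).1:ℝ):ℂ) * Complex.I := by
    have hI : Complex.I * Complex.I = -1 := Complex.I_mul_I
    push_cast
    ring_nf
    rw [Complex.I_sq]
    ring
  rw [this]
  simp [Complex.add_re, Complex.ofReal_re, Complex.mul_re]

lemma chooseR (n k : ℕ) : (n.choose (k+1) : ℝ) = (n.choose k : ℝ) * ((n:ℝ) - k) / (k+1) := by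
  rcases Nat.lt_or_ge k n with h | h
  · have h0 := Nat.choose_succ_right_eq n k
    have hc := congrArg (fun t : ℕ => (t:ℝ)) h0
    push_cast [Nat.cast_sub (le_of_lt h)] at hc
    field_simp
    linarith
  · rcases Nat.eq_or_lt_of_le h with rfl | h'
    · rw [Nat.choose_eq_zero_of_lt (by omega)]
      simp
    · rw [Nat.choose_eq_zero_of_lt (by omega), Nat.choose_eq_zero_of_lt h']
      simp

lemma prod_ratio (j q : ℕ) : ∀ k : ℕ,
    (∏ l ∈ Finset.range k, (((-(j:ℤ) + l) * (-(q:ℤ) + l) : ℤ) : ℝ) / (((1 + l) * (1 + l) : ℤ) : ℝ))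
      = (j.choose k : ℝ) * (q.choose k : ℝ) := by
  intro k
  induction k with
  | zero => simp
  | succ k ih =>
      rw [Finset.prod_range_succ, ih, chooseR j k, chooseR q k]
      have hk : ((k:ℝ) + 1) ≠ 0 := by positivity
      push_cast
      field_simp
      ring

lemma Fh_ext_q (w : ℝ) (j q N : ℕ) (hN : q+1 ≤ N) :
    (∑ k ∈ Finset.range (q+1), (j.choose k : ℝ) * (q.choose k : ℝ) * w^k)
      = ∑ k ∈ Finset.range N, (j.choose k : ℝ) * (q.choose k : ℝ) * w^k := by
  refine Finset.sum_subset (Finset.range_subset_range.mpr hN) fun k _ hk => ?_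
  have : q < k := by
    rcases Nat.lt_or_ge k (q+1) with h | h
    · exact absurd (Finset.mem_range.mpr h) hk
    · omega
  rw [Nat.choose_eq_zero_of_lt this]
  norm_num

end FCaux


namespace FCaux

lemma hypF_eq_Fh (w : ℝ) (j q : ℕ) :
    hypF (-(j:ℤ)) (-(q:ℤ)) 1 q w = Fh w j q := by
  rw [hypF]
  have h1 : (∑ k ∈ Finset.range (q+1),
      (∏ l ∈ Finset.range k,
        (((-(j:ℤ) + l) * (-(q:ℤ) + l) : ℤ) : ℝ) / (((1 + l) * (1 + l) : ℤ) : ℝ)) * w ^ k)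
      = ∑ k ∈ Finset.range (q+1), (j.choose k : ℝ) * (q.choose k : ℝ) * w^k := by
    refine Finset.sum_congr rfl fun k _ => ?_
    rw [prod_ratio j q k]
  rw [h1, Fh_ext_q w j q (j+q+1) (by omega), Fh_ext w j q (j+q+1) (by omega)]

end FCaux


/-- Proposition (hypergeometric form of the exact solution, first component). -/
theorem exact_solution_a1_hypergeometric (m : ℝ) (hm : 0 ≤ m) (ξ η : ℕ) (hη : 1 ≤ η) :
    ka1 m 1 (uhom 1) ((ξ : ℝ) - η + 1) ((ξ : ℝ) + η + 1)
      = (-1 : ℝ) ^ (ξ + 1) * m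
        * (1 + m ^ 2) ^ (-(((ξ : ℝ) + η) / 2) + ((((1 + η) * ξ) % 2 : ℕ) : ℝ))
        * hypF (-(((η - 1) / 2 : ℕ) : ℤ)) (-((ξ / 2 : ℕ) : ℤ)) 1 (ξ / 2)
            (1 - (1 + m ^ 2) ^ 2) := by
  have hkr : ka1 m 1 (uhom 1) ((ξ : ℝ) - η + 1) ((ξ : ℝ) + η + 1)
      = (kwf m 1 (uhom 1) ((ξ : ℝ) - η + 1) ((ξ : ℝ) + η + 1)).re := rfl
  rw [hkr]
  have hx : ((ξ:ℝ) - η + 1) = (((ξ:ℤ) - η + 1 : ℤ) : ℝ) := by push_cast; ring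
  have ht : ((ξ:ℝ) + η + 1) = ((ξ+η+1 : ℕ) : ℝ) := by push_cast; ring
  rw [hx, ht, FCaux.ka1_eval m ((ξ:ℤ) - η + 1) (ξ+η+1), FCaux.PQ_eval m ξ η]
  show (1 + m^2) ^ ((1 - ((ξ+η+1:ℕ):ℝ)) / 2) * (m * FCaux.Qc m ξ η) = _
  rw [FCaux.Qc_eval m ξ η (by omega) ((η-1)/2) (((1+η)*ξ)%2) (ξ/2) rfl rfl rfl,
    FCaux.hypF_eq_Fh (1-(1+m^2)^2) ((η-1)/2) (ξ/2)]
  have hpow : (1+m^2 : ℝ) ^ (-(((ξ:ℝ)+η)/2) + ((((1+η)*ξ)%2 : ℕ):ℝ))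
      = (1+m^2 : ℝ) ^ ((1 - ((ξ+η+1:ℕ):ℝ))/2) * (1+m^2 : ℝ)^((((1+η)*ξ)%2 : ℕ)) := by
    rw [Real.rpow_add (by positivity), Real.rpow_natCast]
    congr 2
    push_cast; ring
  rw [hpow]
  ring
end
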